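/- arXiv:2006.04188 — 5 statements merged into one kernel-verified Lean document; each statement's English description precedes it below -/
import Mathlib

section
/- Let V ~ E(μ, Γ) be an elliptical random element in a separable Hilbert space H with finite second moments, where Γ is the (Hilbert–Schmidt) covariance operator with eigenvalues λ₁ ≥ λ₂ ≥ ... and orthonormal eigenfunctions φ₁, φ₂, .... Fix d with λ_d > 0 and let T_d : H → R^d, T_d(x) = (⟨x,φ₁⟩,...,⟨x,φ_d⟩), W₁ = T_d V, and V₂ the orthogonal projection of V onto span{φ₁,...,φ_d}^⊥. Then (a) the covariance matrix of W₁ equals diag(λ₁,...,λ_d) and is nonsingular, and (b) E(V₂ | W₁) = μ₂ + Γ_{V₂,W₁} Σ_{W₁}^{-1} (W₁ − μ₁), where Γ_{V₂,W₁} is the cross-covariance operator between V₂ and W₁, μ₁ = E(W₁), μ₂ = E(V₂). -/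
open MeasureTheory ProbabilityTheory
open scoped RealInnerProductSpace

noncomputable section

variable {Ω : Type*} [MeasurableSpace Ω]

/-- `V` is an elliptical random element with location `μ0` and scatter operator `Γ`:
there is a characteristic generator `φ` such that every bounded linear image `B V` into a
Euclidean space has characteristic function `t ↦ φ (⟪t, B Γ B* t⟫)` after centering at `B μ0`. -/
def IsElliptical {H : Type*} [NormedAddCommGroup H] [InnerProductSpace ℝ H] [CompleteSpace H]
    (P : Measure Ω) (V : Ω → H) (μ0 : H) (Γ : H →L[ℝ] H) : Prop :=
  ∃ φ : ℝ → ℂ, ∀ (d : ℕ) (B : H →L[ℝ] EuclideanSpace ℝ (Fin d))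
    (t : EuclideanSpace ℝ (Fin d)),
    (∫ ω, Complex.exp (Complex.I * ((⟪t, B (V ω) - B μ0⟫ : ℝ) : ℂ)) ∂P)
      = φ (⟪t, (B ∘L Γ ∘L (ContinuousLinearMap.adjoint B)) t⟫ : ℝ)

/-- `G` is the covariance operator of `V`: `⟪G u, v⟫ = Cov(⟪u, V⟫, ⟪v, V⟫)`. -/
def IsCovOp {H : Type*} [NormedAddCommGroup H] [InnerProductSpace ℝ H]
    (P : Measure Ω) (V : Ω → H) (G : H →L[ℝ] H) : Prop :=
  ∀ u v : H, (⟪G u, v⟫ : ℝ) =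
    ∫ ω, ((⟪u, V ω⟫ : ℝ) - ∫ ω', (⟪u, V ω'⟫ : ℝ) ∂P)
        * ((⟪v, V ω⟫ : ℝ) - ∫ ω', (⟪v, V ω'⟫ : ℝ) ∂P) ∂P

/-- Domain of attraction of `y j` among the points `y 0, …, y (k-1)`, with ties assigned
to the lowest index. -/
def attractionDomain {H : Type*} [NormedAddCommGroup H] {k : ℕ}
    (y : Fin k → H) (j : Fin k) : Set H :=
  {x | (∀ ℓ, ‖x - y j‖ ≤ ‖x - y ℓ‖) ∧ ∀ ℓ, ℓ < j → ‖x - y j‖ < ‖x - y ℓ‖}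

/-- The points `y 0, …, y (k-1)` are self-consistent for `V`:
`E(V | V ∈ D_j) = y j` for each domain of attraction `D_j`. -/
def SelfConsistent {H : Type*} [NormedAddCommGroup H] [NormedSpace ℝ H] {k : ℕ}
    (P : Measure Ω) (V : Ω → H) (y : Fin k → H) : Prop :=
  ∀ j, ∫ ω in V ⁻¹' attractionDomain y j, V ω ∂P
        = (P (V ⁻¹' attractionDomain y j)).toReal • y j

/-- The points `y 0, …, y (k-1)` are principal points of `V`: they minimize the expected
squared distance to the nearest of `k` points. -/
def IsPrincipal {H : Type*} [NormedAddCommGroup H] {k : ℕ}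
    (P : Measure Ω) (V : Ω → H) (y : Fin k → H) : Prop :=
  ∀ z : Fin k → H,
    (∫ ω, (⨅ j, ‖V ω - y j‖) ^ 2 ∂P) ≤ ∫ ω, (⨅ j, ‖V ω - z j‖) ^ 2 ∂P

set_option maxHeartbeats 2000000

open Metric Set
open scoped Manifold

/-- The coordinate map `x ↦ (⟪b j, x⟫)_j` as a continuous linear map to Euclidean space. -/
def coordCLM {H : Type*} [NormedAddCommGroup H] [InnerProductSpace ℝ H] {m : ℕ}
    (b : Fin m → H) : H →L[ℝ] EuclideanSpace ℝ (Fin m) :=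
  ((PiLp.continuousLinearEquiv 2 ℝ (fun _ : Fin m => ℝ)).symm.toContinuousLinearMap).comp
    (ContinuousLinearMap.pi fun j => innerSL ℝ (b j))

@[simp] lemma coordCLM_apply {H : Type*} [NormedAddCommGroup H] [InnerProductSpace ℝ H] {m : ℕ}
    (b : Fin m → H) (x : H) (j : Fin m) : coordCLM b x j = ⟪b j, x⟫ := rfl

lemma coordCLM_adjoint {H : Type*} [NormedAddCommGroup H] [InnerProductSpace ℝ H]
    [CompleteSpace H] {m : ℕ} (b : Fin m → H) (t : EuclideanSpace ℝ (Fin m)) :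
    ContinuousLinearMap.adjoint (coordCLM b) t = ∑ j, t j • b j := by
  refine ext_inner_right ℝ fun y => ?_
  rw [ContinuousLinearMap.adjoint_inner_left, sum_inner]
  rw [PiLp.inner_apply]
  refine Finset.sum_congr rfl fun j _ => ?_
  rw [real_inner_smul_left, coordCLM_apply]
  simp
  ring

lemma coordCLM_qform {H : Type*} [NormedAddCommGroup H] [InnerProductSpace ℝ H]
    [CompleteSpace H] {m : ℕ} (b : Fin m → H) (Γ : H →L[ℝ] H) (t : EuclideanSpace ℝ (Fin m)) :
    (⟪t, ((coordCLM b) ∘L Γ ∘L (ContinuousLinearMap.adjoint (coordCLM b))) t⟫ : ℝ)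
      = ∑ j, ∑ k, t j * t k * ⟪b j, Γ (b k)⟫ := by
  rw [ContinuousLinearMap.comp_apply, ContinuousLinearMap.comp_apply, coordCLM_adjoint,
    PiLp.inner_apply]
  refine Finset.sum_congr rfl fun j _ => ?_
  rw [coordCLM_apply, map_sum, inner_sum]
  simp only [RCLike.inner_apply, starRingEnd_apply, star_trivial, Finset.mul_sum, Finset.sum_mul]
  refine Finset.sum_congr rfl fun k _ => ?_
  rw [ContinuousLinearMap.map_smul, real_inner_smul_right]
  ring

/-- A smooth compactly supported function as a Schwartz map. -/
def ofCompactSchwartz {E : Type*} [NormedAddCommGroup E] [NormedSpace ℝ E]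
    (f : E → ℂ) (hf : ContDiff ℝ (⊤ : ℕ∞) f) (h2 : HasCompactSupport f) : SchwartzMap E ℂ where
  toFun := f
  smooth' := hf
  decay' := by
    intro k n
    have hcs : HasCompactSupport fun x => ‖x‖ ^ k * ‖iteratedFDeriv ℝ n f x‖ :=
      ((h2.iteratedFDeriv n).norm).mul_left
    have hcont : Continuous fun x => ‖x‖ ^ k * ‖iteratedFDeriv ℝ n f x‖ :=
      ((continuous_norm.pow k).mul (hf.continuous_iteratedFDeriv (by exact_mod_cast le_top)).norm)
    obtain ⟨C, hC⟩ := hcs.exists_bound_of_continuous hcont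
    exact ⟨C, fun x => (le_abs_self _).trans ((Real.norm_eq_abs _) ▸ hC x)⟩

@[simp] lemma ofCompactSchwartz_apply {E : Type*} [NormedAddCommGroup E] [NormedSpace ℝ E]
    (f : E → ℂ) (hf : ContDiff ℝ (⊤ : ℕ∞) f) (h2 : HasCompactSupport f) (x : E) :
    ofCompactSchwartz f hf h2 x = f x := rfl

variable {n : ℕ}

local notation "E" => EuclideanSpace ℝ (Fin n)

/-- Step 1: duality formula. -/
lemma integral_fourier_eq (κ : Measure E) [IsProbabilityMeasure κ] (g : SchwartzMap E ℂ) :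
    ∫ x, FourierTransform.fourier (⇑g) x ∂κ
      = ∫ v, (∫ x, Complex.exp (Complex.I * ((⟪(-2 * Real.pi) • v, x⟫ : ℝ) : ℂ)) ∂κ) * g v := by
  have hcont : Continuous fun p : E × E =>
      Complex.exp (Complex.I * ((⟪(-2 * Real.pi) • p.2, p.1⟫ : ℝ) : ℂ)) * g p.2 := by
    apply Continuous.mul
    · apply Complex.continuous_exp.comp
      apply Continuous.mul continuous_const
      exact Complex.continuous_ofReal.comp
        ((continuous_inner (𝕜 := ℝ)).comp ((continuous_snd.const_smul (-2 * Real.pi)).prodMk continuous_fst))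
    · exact g.continuous.comp continuous_snd
  have hnorm : ∀ p : E × E,
      ‖Complex.exp (Complex.I * ((⟪(-2 * Real.pi) • p.2, p.1⟫ : ℝ) : ℂ)) * g p.2‖ = ‖g p.2‖ := by
    intro p
    rw [norm_mul, mul_comm Complex.I, Complex.norm_exp_ofReal_mul_I, one_mul]
  have hint : Integrable (Function.uncurry fun x v =>
      Complex.exp (Complex.I * ((⟪(-2 * Real.pi) • v, x⟫ : ℝ) : ℂ)) * g v)
      (κ.prod volume) := by
    refine (integrable_prod_iff ?_).mpr ⟨?_, ?_⟩
    · exact hcont.aestronglyMeasurable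
    · refine Filter.Eventually.of_forall fun x => ?_
      apply Integrable.mono' g.integrable.norm
        (hcont.comp (Continuous.prodMk_right x)).aestronglyMeasurable
      exact Filter.Eventually.of_forall fun v => le_of_eq (hnorm (x, v))
    · have : (fun x => ∫ v, ‖Function.uncurry (fun x v =>
          Complex.exp (Complex.I * ((⟪(-2 * Real.pi) • v, x⟫ : ℝ) : ℂ)) * g v) (x, v)‖ ∂volume)
          = fun _ => ∫ v, ‖g v‖ ∂volume := by
        funext x
        exact congrArg (fun f : E → ℝ => ∫ v, f v ∂volume) (funext fun v => hnorm (x, v))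
      rw [this]
      exact integrable_const _
  calc ∫ x, FourierTransform.fourier (⇑g) x ∂κ
      = ∫ x, ∫ v, Complex.exp (Complex.I * ((⟪(-2 * Real.pi) • v, x⟫ : ℝ) : ℂ)) * g v ∂volume ∂κ := by
        refine integral_congr_ae (Filter.Eventually.of_forall fun x => ?_)
        rw [Real.fourier_eq']
        refine congrArg (fun f : E → ℂ => ∫ v, f v ∂volume) (funext fun v => ?_)
        rw [smul_eq_mul]
        congr 2
        rw [real_inner_smul_left]
        push_cast
        ring
    _ = ∫ v, ∫ x, Complex.exp (Complex.I * ((⟪(-2 * Real.pi) • v, x⟫ : ℝ) : ℂ)) * g v ∂κ ∂volume :=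
        integral_integral_swap hint
    _ = ∫ v, (∫ x, Complex.exp (Complex.I * ((⟪(-2 * Real.pi) • v, x⟫ : ℝ) : ℂ)) ∂κ) * g v ∂volume := by
        refine congrArg (fun f : E → ℂ => ∫ v, f v ∂volume) (funext fun v => ?_)
        exact integral_mul_const _ _

/-- Uniqueness of probability measures with the same characteristic function. -/
lemma ext_of_charfn (μ ν : Measure E) [IsProbabilityMeasure μ] [IsProbabilityMeasure ν]
    (h : ∀ t : E, ∫ x, Complex.exp (Complex.I * ((⟪t, x⟫ : ℝ) : ℂ)) ∂μ
      = ∫ x, Complex.exp (Complex.I * ((⟪t, x⟫ : ℝ) : ℂ)) ∂ν) : μ = ν := by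
  -- integrals of Fourier transforms of Schwartz maps agree
  have key1 : ∀ g : SchwartzMap E ℂ,
      ∫ x, FourierTransform.fourier (⇑g) x ∂μ = ∫ x, FourierTransform.fourier (⇑g) x ∂ν := by
    intro g
    rw [integral_fourier_eq μ g, integral_fourier_eq ν g]
    refine congrArg (fun f : E → ℂ => ∫ v, f v ∂volume) (funext fun v => ?_)
    rw [h ((-2 * Real.pi) • v)]
  -- integrals of all Schwartz maps agree
  have key2 : ∀ g : SchwartzMap E ℂ, ∫ x, g x ∂μ = ∫ x, g x ∂ν := by
    intro g
    have h1 := key1 ((FourierTransform.fourierCLE ℂ (SchwartzMap E ℂ)).symm g)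
    have h2 : (FourierTransform.fourierCLE ℂ (SchwartzMap E ℂ)) ((FourierTransform.fourierCLE ℂ (SchwartzMap E ℂ)).symm g)
        = g := (FourierTransform.fourierCLE ℂ (SchwartzMap E ℂ)).apply_symm_apply g
    calc ∫ x, g x ∂μ
        = ∫ x, ((FourierTransform.fourierCLE ℂ (SchwartzMap E ℂ))
            ((FourierTransform.fourierCLE ℂ (SchwartzMap E ℂ)).symm g)) x ∂μ := by rw [h2]
      _ = ∫ x, FourierTransform.fourier (⇑((FourierTransform.fourierCLE ℂ (SchwartzMap E ℂ)).symm g)) x ∂μ := rfl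
      _ = ∫ x, FourierTransform.fourier (⇑((FourierTransform.fourierCLE ℂ (SchwartzMap E ℂ)).symm g)) x ∂ν := h1
      _ = ∫ x, ((FourierTransform.fourierCLE ℂ (SchwartzMap E ℂ))
            ((FourierTransform.fourierCLE ℂ (SchwartzMap E ℂ)).symm g)) x ∂ν := rfl
      _ = ∫ x, g x ∂ν := by rw [h2]
  -- integrals of smooth compactly supported real functions agree
  have key3 : ∀ f : E → ℝ, ContDiff ℝ (⊤ : ℕ∞) f → HasCompactSupport f →
      ∫ x, f x ∂μ = ∫ x, f x ∂ν := by
    intro f hf hcs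
    have hfc : ContDiff ℝ (⊤ : ℕ∞) fun x => ((f x : ℂ)) :=
      Complex.ofRealCLM.contDiff.comp hf
    have hcsc : HasCompactSupport fun x => ((f x : ℂ)) :=
      hcs.comp_left (g := Complex.ofReal) Complex.ofReal_zero
    have := key2 (ofCompactSchwartz (fun x => ((f x : ℂ))) hfc hcsc)
    simp only [ofCompactSchwartz_apply] at this
    have e1 : ∫ x, ((f x : ℝ) : ℂ) ∂μ = ((∫ x, f x ∂μ : ℝ) : ℂ) := integral_ofReal
    have e2 : ∫ x, ((f x : ℝ) : ℂ) ∂ν = ((∫ x, f x ∂ν : ℝ) : ℂ) := integral_ofReal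
    rw [e1, e2] at this
    exact_mod_cast this
  -- measures of compact sets agree
  have key4 : ∀ K : Set E, IsCompact K → μ K = ν K := by
    intro K hK
    have main : ∀ (κ₁ κ₂ : Measure E), IsProbabilityMeasure κ₁ → IsProbabilityMeasure κ₂ →
        (∀ f : E → ℝ, ContDiff ℝ (⊤ : ℕ∞) f → HasCompactSupport f →
          ∫ x, f x ∂κ₁ = ∫ x, f x ∂κ₂) → κ₁ K ≤ κ₂ K := by
      intro κ₁ κ₂ h₁ h₂ hint
      have hbound : ∀ δ : ℝ, 0 < δ → (κ₁ K).toReal ≤ (κ₂ (thickening δ K)).toReal := by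
        intro δ hδ
        obtain ⟨f, hf0, hf1, hf01⟩ := exists_contMDiffMap_zero_one_of_isClosed (n := ⊤) (𝓘(ℝ, E))
          (isOpen_thickening.isClosed_compl) hK.isClosed
          (disjoint_compl_left_iff_subset.mpr (self_subset_thickening hδ K))
        have hfc : ContDiff ℝ (⊤ : ℕ∞) ⇑f := f.contMDiff.contDiff
        have hsupp : Function.support ⇑f ⊆ cthickening δ K := by
          intro x hx
          by_contra hmem
          exact hx (hf0 fun hc => hmem (thickening_subset_cthickening δ K hc))
        have hcs : HasCompactSupport ⇑f :=
          HasCompactSupport.of_support_subset_isCompact (hK.cthickening) hsupp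
        have hfint₁ : Integrable ⇑f κ₁ := f.contMDiff.contDiff.continuous.integrable_of_hasCompactSupport hcs
        have hfint₂ : Integrable ⇑f κ₂ := f.contMDiff.contDiff.continuous.integrable_of_hasCompactSupport hcs
        have lb : (κ₁ K).toReal ≤ ∫ x, f x ∂κ₁ := by
          have : ∫ x, K.indicator (fun _ => (1 : ℝ)) x ∂κ₁ = (κ₁ K).toReal := by
            rw [integral_indicator_const _ hK.isClosed.measurableSet]; simp; rfl
          rw [← this]
          refine integral_mono ((integrable_const (1:ℝ)).indicator hK.isClosed.measurableSet) hfint₁ ?_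
          intro x
          by_cases hx : x ∈ K
          · simp [hx, hf1 hx]
          · simp only [indicator, hx, if_false]
            exact (hf01 x).1
        have ub : ∫ x, f x ∂κ₂ ≤ (κ₂ (thickening δ K)).toReal := by
          have : ∫ x, (thickening δ K).indicator (fun _ => (1 : ℝ)) x ∂κ₂
              = (κ₂ (thickening δ K)).toReal := by
            rw [integral_indicator_const _ isOpen_thickening.measurableSet]; simp; rfl
          rw [← this]
          refine integral_mono hfint₂
            ((integrable_const (1:ℝ)).indicator isOpen_thickening.measurableSet) ?_
          intro x
          by_cases hx : x ∈ thickening δ K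
          · simp only [indicator, hx, if_true]
            exact (hf01 x).2
          · have : f x = 0 := hf0 hx
            simp [indicator, hx, this]
        calc (κ₁ K).toReal ≤ ∫ x, f x ∂κ₁ := lb
          _ = ∫ x, f x ∂κ₂ := hint _ hfc hcs
          _ ≤ (κ₂ (thickening δ K)).toReal := ub
      have htend : Filter.Tendsto (fun δ => (κ₂ (thickening δ K)).toReal)
          (nhdsWithin 0 (Set.Ioi 0)) (nhds ((κ₂ K).toReal)) := by
        refine (ENNReal.tendsto_toReal (measure_ne_top κ₂ K)).comp ?_
        exact tendsto_measure_thickening_of_isClosed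
          ⟨1, one_pos, measure_ne_top κ₂ _⟩ hK.isClosed
      have hle : (κ₁ K).toReal ≤ (κ₂ K).toReal := by
        refine ge_of_tendsto htend ?_
        filter_upwards [self_mem_nhdsWithin] with δ hδ
        exact hbound δ hδ
      exact (ENNReal.toReal_le_toReal (measure_ne_top κ₁ K) (measure_ne_top κ₂ K)).mp hle
    exact le_antisymm (main μ ν ‹_› ‹_› key3)
      (main ν μ ‹_› ‹_› fun f hf hcs => (key3 f hf hcs).symm)
  -- measures of closed sets agree
  have key5 : ∀ F : Set E, IsClosed F → μ F = ν F := by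
    intro F hF
    have hmono : Monotone fun m : ℕ => F ∩ closedBall 0 m := by
      intro a b hab
      exact inter_subset_inter_right F (closedBall_subset_closedBall (by exact_mod_cast hab))
    have hU : ⋃ m : ℕ, (F ∩ closedBall 0 m) = F := by
      ext x
      simp only [mem_iUnion, mem_inter_iff, mem_closedBall, dist_zero_right]
      constructor
      · rintro ⟨m, hm, _⟩; exact hm
      · intro hx
        obtain ⟨m, hm⟩ := exists_nat_ge ‖x‖
        exact ⟨m, hx, hm⟩
    have h₁ := tendsto_measure_iUnion_atTop (μ := μ) hmono
    have h₂ := tendsto_measure_iUnion_atTop (μ := ν) hmono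
    rw [hU] at h₁ h₂
    simp only [Function.comp_def] at h₁ h₂
    have heq : (fun m : ℕ => μ (F ∩ closedBall 0 m)) = fun m : ℕ => ν (F ∩ closedBall 0 m) := by
      funext m
      exact key4 _ ((isCompact_closedBall 0 m).inter_left hF)
    rw [heq] at h₁
    exact tendsto_nhds_unique h₁ h₂
  -- conclude
  refine ext_of_generate_finite {s : Set E | IsClosed s} ?_ isPiSystem_isClosed
    (fun s hs => key5 s hs) (by simp)
  rw [BorelSpace.measurable_eq (α := E), borel_eq_generateFrom_isClosed]

/-- Theorem on splitting an elliptical element: `W₁ = T_d V` has covariance matrix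
`diag(λ₁,…,λ_d)` (nonsingular), and `E(V₂ | W₁) = μ₂ + Γ_{V₂,W₁} Σ_{W₁}⁻¹ (W₁ - μ₁)`. -/
theorem elliptical_conditional_expectation {H : Type*}
    [NormedAddCommGroup H] [InnerProductSpace ℝ H] [CompleteSpace H]
    [SecondCountableTopology H] [MeasurableSpace H] [BorelSpace H]
    (P : Measure Ω) [IsProbabilityMeasure P]
    (V : Ω → H) (μ0 : H) (Γ : H →L[ℝ] H)
    (hmeas : Measurable V)
    (hV : IsElliptical P V μ0 Γ)
    (hm2 : Integrable (fun ω => ‖V ω‖ ^ 2) P)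
    (hIntV : Integrable V P) (hmean : ∫ ω, V ω ∂P = μ0)
    -- `Γ` is the covariance operator of `V`
    (hGcov : IsCovOp P V Γ)
    -- orthonormal eigenfunctions `φ` of `Γ` with decreasing eigenvalues `lam`
    (φ : ℕ → H) (lam : ℕ → ℝ)
    (hON : Orthonormal ℝ φ)
    (heig : ∀ n, Γ (φ n) = lam n • φ n)
    (hdec : Antitone lam)
    (hHS : Summable lam)
    (d : ℕ) (hd : 0 < d) (hpos : 0 < lam (d - 1))
    -- the finite-dimensional projection `W₁` and the orthogonal part `V₂`
    (W₁ : Ω → EuclideanSpace ℝ (Fin d))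
    (hW₁ : ∀ ω, W₁ ω = fun i : Fin d => (⟪φ (i : ℕ), V ω⟫ : ℝ))
    (V₂ : Ω → H)
    (hV₂ : ∀ ω, V₂ ω = V ω - ∑ i : Fin d, (⟪φ (i : ℕ), V ω⟫ : ℝ) • φ (i : ℕ))
    (μ₁ : EuclideanSpace ℝ (Fin d)) (hμ₁ : μ₁ = fun i : Fin d => (⟪φ (i : ℕ), μ0⟫ : ℝ))
    (μ₂ : H) (hμ₂ : μ₂ = μ0 - ∑ i : Fin d, (⟪φ (i : ℕ), μ0⟫ : ℝ) • φ (i : ℕ))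
    -- cross-covariance operator between `V₂` and `W₁`
    (Γcross : EuclideanSpace ℝ (Fin d) →L[ℝ] H)
    (hcross : ∀ (x : EuclideanSpace ℝ (Fin d)) (h : H),
      (⟪Γcross x, h⟫ : ℝ)
        = ∫ ω, ((⟪h, V₂ ω⟫ : ℝ) - (⟪h, μ₂⟫ : ℝ)) * ((⟪x, W₁ ω⟫ : ℝ) - (⟪x, μ₁⟫ : ℝ)) ∂P) :
    -- (a) the covariance matrix of `W₁` is `diag(λ₁,…,λ_d)`, which is nonsingular
    ((Matrix.of fun i j : Fin d =>
        ∫ ω, (W₁ ω i - μ₁ i) * (W₁ ω j - μ₁ j) ∂P)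
      = Matrix.diagonal (fun i : Fin d => lam (i : ℕ)) ∧
      IsUnit (Matrix.of fun i j : Fin d =>
        ∫ ω, (W₁ ω i - μ₁ i) * (W₁ ω j - μ₁ j) ∂P).det) ∧
    -- (b) `E(V₂ | W₁) = μ₂ + Γ_{V₂,W₁} Σ_{W₁}⁻¹ (W₁ − μ₁)` (here `Σ_{W₁}⁻¹` is
    -- coordinatewise division by the eigenvalues, since `Σ_{W₁}` is diagonal)
    (P[V₂ | MeasurableSpace.comap W₁ inferInstance]
      =ᵐ[P] fun ω => μ₂ + Γcross (WithLp.toLp 2 (fun i : Fin d => (W₁ ω i - μ₁ i) / lam (i : ℕ)))) := by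
  classical
  have hlam : ∀ i : Fin d, 0 < lam (i : ℕ) := fun i =>
    lt_of_lt_of_le hpos (hdec (Nat.le_pred_of_lt i.isLt))
  have hintInner : ∀ c : H, Integrable (fun ω => (⟪c, V ω⟫ : ℝ)) P :=
    fun c => (innerSL ℝ c).integrable_comp hIntV
  have hmean' : ∀ c : H, ∫ ω, (⟪c, V ω⟫ : ℝ) ∂P = ⟪c, μ0⟫ := by
    intro c; rw [integral_inner hIntV, hmean]
  have hcov : ∀ a c : H,
      ∫ ω, ((⟪a, V ω⟫ : ℝ) - ⟪a, μ0⟫) * ((⟪c, V ω⟫ : ℝ) - ⟪c, μ0⟫) ∂P = ⟪Γ a, c⟫ := by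
    intro a c
    rw [hGcov a c, hmean' a, hmean' c]
  have hsym : ∀ a c : H, (⟪Γ a, c⟫ : ℝ) = ⟪Γ c, a⟫ := by
    intro a c
    rw [hGcov a c, hGcov c a]
    exact integral_congr_ae (Filter.Eventually.of_forall fun ω => mul_comm _ _)
  have hip : ∀ i j : Fin d, (⟪φ (i : ℕ), φ (j : ℕ)⟫ : ℝ) = if i = j then 1 else 0 := by
    intro i j
    rw [orthonormal_iff_ite.mp hON]
    by_cases hij : i = j
    · simp [hij]
    · have : (i : ℕ) ≠ (j : ℕ) := fun hc => hij (Fin.ext hc)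
      simp [hij, this]
  -- Part (a)
  have parta : (Matrix.of fun i j : Fin d =>
      ∫ ω, (W₁ ω i - μ₁ i) * (W₁ ω j - μ₁ j) ∂P)
      = Matrix.diagonal (fun i : Fin d => lam (i : ℕ)) := by
    ext i j
    have hcoord : ∀ ω, ∀ i : Fin d, W₁ ω i - μ₁ i = (⟪φ (i : ℕ), V ω⟫ : ℝ) - ⟪φ (i : ℕ), μ0⟫ := by
      intro ω i; rw [hW₁ ω, hμ₁]
    simp only [Matrix.of_apply]
    calc ∫ ω, (W₁ ω i - μ₁ i) * (W₁ ω j - μ₁ j) ∂P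
        = ∫ ω, ((⟪φ (i : ℕ), V ω⟫ : ℝ) - ⟪φ (i : ℕ), μ0⟫)
            * ((⟪φ (j : ℕ), V ω⟫ : ℝ) - ⟪φ (j : ℕ), μ0⟫) ∂P := by
          refine integral_congr_ae (Filter.Eventually.of_forall fun ω => ?_)
          simp only [hcoord ω i, hcoord ω j]
      _ = ⟪Γ (φ (i : ℕ)), φ (j : ℕ)⟫ := hcov _ _
      _ = lam (i : ℕ) * ⟪φ (i : ℕ), φ (j : ℕ)⟫ := by rw [heig, real_inner_smul_left]
      _ = Matrix.diagonal (fun i : Fin d => lam (i : ℕ)) i j := by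
          rw [hip i j]
          by_cases hij : i = j
          · simp [hij, Matrix.diagonal_apply_eq]
          · simp [hij, Matrix.diagonal_apply_ne _ hij]
  refine ⟨⟨parta, ?_⟩, ?_⟩
  · rw [parta, Matrix.det_diagonal]
    exact isUnit_iff_ne_zero.mpr (ne_of_gt (Finset.prod_pos fun i _ => hlam i))
  -- Part (b)
  have hW₁eq : W₁ = fun ω => coordCLM (fun i : Fin d => φ (i : ℕ)) (V ω) := by
    funext ω
    ext i; rw [hW₁ ω]
    rfl
  have hW₁m : Measurable W₁ := by
    rw [hW₁eq]
    exact (coordCLM _).continuous.measurable.comp hmeas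
  have hm : MeasurableSpace.comap W₁ inferInstance ≤ ‹MeasurableSpace Ω› := hW₁m.comap_le
  haveI : SigmaFinite (P.trim hm) := by
    have : IsFiniteMeasure (P.trim hm) := by infer_instance
    infer_instance
  -- inner products with the projection remainder
  have hswap : ∀ c y : H,
      (⟪c, y - ∑ i : Fin d, ((⟪φ (i : ℕ), y⟫ : ℝ)) • φ (i : ℕ)⟫ : ℝ)
        = ⟪c - ∑ i : Fin d, ((⟪φ (i : ℕ), c⟫ : ℝ)) • φ (i : ℕ), y⟫ := by
    intro c y
    rw [inner_sub_right, inner_sub_left, inner_sum, sum_inner]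
    congr 1
    refine Finset.sum_congr rfl fun i _ => ?_
    rw [real_inner_smul_right, real_inner_smul_left, real_inner_comm c (φ (i : ℕ))]
    ring
  have hperp : ∀ c : H, ∀ i : Fin d,
      (⟪φ (i : ℕ), c - ∑ j : Fin d, ((⟪φ (j : ℕ), c⟫ : ℝ)) • φ (j : ℕ)⟫ : ℝ) = 0 := by
    intro c i
    rw [inner_sub_right, inner_sum]
    simp_rw [real_inner_smul_right]
    rw [Finset.sum_eq_single i]
    · rw [hip i i, if_pos rfl, mul_one, sub_self]
    · intro j _ hji
      rw [hip i j, if_neg (Ne.symm hji), mul_zero]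
    · intro hc
      exact absurd (Finset.mem_univ i) hc
  have hV₂int : Integrable V₂ P := by
    have h1 : Integrable (fun ω => V ω - ∑ i : Fin d, ((⟪φ (i : ℕ), V ω⟫ : ℝ)) • φ (i : ℕ)) P :=
      hIntV.sub (integrable_finset_sum _ fun i _ => ((hintInner (φ (i : ℕ))).smul_const (φ (i : ℕ))))
    exact h1.congr (Filter.Eventually.of_forall fun ω => (hV₂ ω).symm)
  -- the cross-covariance operator vanishes
  have hcrossval : ∀ (x : EuclideanSpace ℝ (Fin d)) (c : H), (⟪Γcross x, c⟫ : ℝ) = 0 := by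
    intro x c
    set c' : H := c - ∑ i : Fin d, ((⟪φ (i : ℕ), c⟫ : ℝ)) • φ (i : ℕ) with hc'
    set vx : H := ∑ i : Fin d, x i • φ (i : ℕ) with hvx
    have hpt : ∀ ω, ((⟪c, V₂ ω⟫ : ℝ) - ⟪c, μ₂⟫) * ((⟪x, W₁ ω⟫ : ℝ) - ⟪x, μ₁⟫)
        = ((⟪c', V ω⟫ : ℝ) - ⟪c', μ0⟫) * ((⟪vx, V ω⟫ : ℝ) - ⟪vx, μ0⟫) := by
      intro ω
      have e1 : (⟪c, V₂ ω⟫ : ℝ) = ⟪c', V ω⟫ := by rw [hV₂ ω, hswap c (V ω)]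
      have e2 : (⟪c, μ₂⟫ : ℝ) = ⟪c', μ0⟫ := by rw [hμ₂, hswap c μ0]
      have e3 : (⟪x, W₁ ω⟫ : ℝ) = ⟪vx, V ω⟫ := by
        rw [hvx, sum_inner, PiLp.inner_apply, hW₁ ω]
        refine Finset.sum_congr rfl fun i _ => ?_
        rw [real_inner_smul_left]
        simp
        ring
      have e4 : (⟪x, μ₁⟫ : ℝ) = ⟪vx, μ0⟫ := by
        rw [hvx, sum_inner, PiLp.inner_apply, hμ₁]
        refine Finset.sum_congr rfl fun i _ => ?_
        rw [real_inner_smul_left]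
        simp
        ring
      rw [e1, e2, e3, e4]
    calc (⟪Γcross x, c⟫ : ℝ)
        = ∫ ω, ((⟪c, V₂ ω⟫ : ℝ) - ⟪c, μ₂⟫) * ((⟪x, W₁ ω⟫ : ℝ) - ⟪x, μ₁⟫) ∂P := hcross x c
      _ = ∫ ω, ((⟪c', V ω⟫ : ℝ) - ⟪c', μ0⟫) * ((⟪vx, V ω⟫ : ℝ) - ⟪vx, μ0⟫) ∂P :=
          integral_congr_ae (Filter.Eventually.of_forall hpt)
      _ = ⟪Γ c', vx⟫ := hcov c' vx
      _ = 0 := by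
          rw [hvx, inner_sum]
          refine Finset.sum_eq_zero fun i _ => ?_
          rw [real_inner_smul_right, hsym c' (φ (i : ℕ)), heig, real_inner_smul_left,
            hperp c i]
          ring
  have hΓ0 : ∀ x : EuclideanSpace ℝ (Fin d), Γcross x = 0 := by
    intro x
    refine ext_inner_right ℝ fun c => ?_
    rw [hcrossval x c, inner_zero_left]
  -- the key symmetry step
  have hkey : ∀ u : H, (∀ i : Fin d, (⟪φ (i : ℕ), u⟫ : ℝ) = 0) →
      ∀ S : Set (EuclideanSpace ℝ (Fin d)), MeasurableSet S →
      ∫ ω in W₁ ⁻¹' S, ((⟪u, V ω⟫ : ℝ) - ⟪u, μ0⟫) ∂P = 0 := by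
    obtain ⟨φfn, hφfn⟩ := hV
    intro u hu S hS
    set b : Fin (d + 1) → H := Fin.snoc (fun i : Fin d => φ (i : ℕ)) u with hb
    set b' : Fin (d + 1) → H := Fin.snoc (fun i : Fin d => φ (i : ℕ)) (-u) with hb'
    set B : H →L[ℝ] EuclideanSpace ℝ (Fin (d + 1)) := coordCLM b with hB
    set B' : H →L[ℝ] EuclideanSpace ℝ (Fin (d + 1)) := coordCLM b' with hB'
    set X : Ω → EuclideanSpace ℝ (Fin (d + 1)) := fun ω => B (V ω) - B μ0 with hXdef
    set X' : Ω → EuclideanSpace ℝ (Fin (d + 1)) := fun ω => B' (V ω) - B' μ0 with hX'def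
    have hXm : Measurable X := (B.continuous.measurable.comp hmeas).sub measurable_const
    have hX'm : Measurable X' := (B'.continuous.measurable.comp hmeas).sub measurable_const
    -- entries of the scatter matrices agree
    have hGu : ∀ i : Fin d, (⟪φ (i : ℕ), Γ u⟫ : ℝ) = 0 := by
      intro i
      rw [real_inner_comm, hsym u (φ (i : ℕ)), heig, real_inner_smul_left, hu i, mul_zero]
    have hGu' : ∀ i : Fin d, (⟪u, Γ (φ (i : ℕ))⟫ : ℝ) = 0 := by
      intro i
      rw [heig, real_inner_smul_right, real_inner_comm, hu i, mul_zero]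
    have hbb : ∀ j k : Fin (d + 1), (⟪b j, Γ (b k)⟫ : ℝ) = ⟪b' j, Γ (b' k)⟫ := by
      intro j k
      refine Fin.lastCases ?_ ?_ j
      · refine Fin.lastCases ?_ ?_ k
        · simp only [hb, hb', Fin.snoc_last]
          rw [map_neg, inner_neg_neg]
        · intro c
          simp only [hb, hb', Fin.snoc_last, Fin.snoc_castSucc]
          rw [hGu' c, inner_neg_left, hGu' c, neg_zero]
      · intro a
        refine Fin.lastCases ?_ ?_ k
        · simp only [hb, hb', Fin.snoc_last, Fin.snoc_castSucc]
          rw [map_neg, inner_neg_right, hGu a, neg_zero]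
        · intro c
          simp only [hb, hb', Fin.snoc_castSucc]
    have hq : ∀ t : EuclideanSpace ℝ (Fin (d + 1)),
        (⟪t, (B ∘L Γ ∘L ContinuousLinearMap.adjoint B) t⟫ : ℝ)
          = ⟪t, (B' ∘L Γ ∘L ContinuousLinearMap.adjoint B') t⟫ := by
      intro t
      rw [hB, hB', coordCLM_qform, coordCLM_qform]
      exact Finset.sum_congr rfl fun j _ => Finset.sum_congr rfl fun k _ => by rw [hbb j k]
    have hchar : ∀ t : EuclideanSpace ℝ (Fin (d + 1)),
        ∫ ω, Complex.exp (Complex.I * ((⟪t, X ω⟫ : ℝ) : ℂ)) ∂P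
          = ∫ ω, Complex.exp (Complex.I * ((⟪t, X' ω⟫ : ℝ) : ℂ)) ∂P := by
      intro t
      calc ∫ ω, Complex.exp (Complex.I * ((⟪t, X ω⟫ : ℝ) : ℂ)) ∂P
          = φfn (⟪t, (B ∘L Γ ∘L ContinuousLinearMap.adjoint B) t⟫ : ℝ) := hφfn (d + 1) B t
        _ = φfn (⟪t, (B' ∘L Γ ∘L ContinuousLinearMap.adjoint B') t⟫ : ℝ) := by rw [hq t]
        _ = ∫ ω, Complex.exp (Complex.I * ((⟪t, X' ω⟫ : ℝ) : ℂ)) ∂P := (hφfn (d + 1) B' t).symm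
    have hlaw : Measure.map X P = Measure.map X' P := by
      haveI : IsProbabilityMeasure (Measure.map X P) :=
        Measure.isProbabilityMeasure_map hXm.aemeasurable
      haveI : IsProbabilityMeasure (Measure.map X' P) :=
        Measure.isProbabilityMeasure_map hX'm.aemeasurable
      refine ext_of_charfn _ _ fun t => ?_
      have hcont : Continuous fun x : EuclideanSpace ℝ (Fin (d + 1)) =>
          Complex.exp (Complex.I * ((⟪t, x⟫ : ℝ) : ℂ)) := by
        apply Complex.continuous_exp.comp
        exact continuous_const.mul (Complex.continuous_ofReal.comp (continuous_const.inner continuous_id))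
      rw [integral_map hXm.aemeasurable hcont.aestronglyMeasurable,
        integral_map hX'm.aemeasurable hcont.aestronglyMeasurable]
      exact hchar t
    -- the test function
    set F : EuclideanSpace ℝ (Fin (d + 1)) → ℝ := fun x =>
      x (Fin.last d) * S.indicator (fun _ => (1 : ℝ))
        (WithLp.toLp 2 (fun i : Fin d => x (Fin.castSucc i) + μ₁ i : Fin d → ℝ) :
          EuclideanSpace ℝ (Fin d)) with hF
    have hFm : Measurable F := by
      apply Measurable.mul
      · exact (measurable_pi_apply (Fin.last d)).comp (WithLp.measurable_ofLp 2 _)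
      · have hproj : Measurable fun x : EuclideanSpace ℝ (Fin (d + 1)) =>
            (WithLp.toLp 2 (fun i : Fin d => x (Fin.castSucc i) + μ₁ i : Fin d → ℝ) :
              EuclideanSpace ℝ (Fin d)) := by
          refine (WithLp.measurable_toLp 2 _).comp ?_
          apply measurable_pi_lambda
          intro i
          have hev : Measurable fun x : EuclideanSpace ℝ (Fin (d + 1)) =>
              x (Fin.castSucc i) := (measurable_pi_apply _).comp (WithLp.measurable_ofLp 2 _)
          exact hev.add_const (μ₁ i)
        exact ((measurable_const.indicator hS).comp hproj)
    -- coordinates of X and X'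
    have hXlast : ∀ ω, X ω (Fin.last d) = (⟪u, V ω⟫ : ℝ) - ⟪u, μ0⟫ := by
      intro ω
      show (B (V ω) - B μ0) (Fin.last d) = _
      rw [PiLp.sub_apply]
      simp only [hB, coordCLM_apply, hb, Fin.snoc_last]
    have hX'last : ∀ ω, X' ω (Fin.last d) = -((⟪u, V ω⟫ : ℝ) - ⟪u, μ0⟫) := by
      intro ω
      show (B' (V ω) - B' μ0) (Fin.last d) = _
      rw [PiLp.sub_apply]
      simp only [hB', coordCLM_apply, hb', Fin.snoc_last, inner_neg_left]
      ring
    have hXcast : ∀ ω, ∀ i : Fin d, X ω (Fin.castSucc i) + μ₁ i = W₁ ω i := by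
      intro ω i
      show (B (V ω) - B μ0) (Fin.castSucc i) + μ₁ i = _
      rw [PiLp.sub_apply]
      simp only [hB, coordCLM_apply, hb, Fin.snoc_castSucc]
      rw [hW₁ ω, hμ₁]
      ring
    have hX'cast : ∀ ω, ∀ i : Fin d, X' ω (Fin.castSucc i) + μ₁ i = W₁ ω i := by
      intro ω i
      show (B' (V ω) - B' μ0) (Fin.castSucc i) + μ₁ i = _
      rw [PiLp.sub_apply]
      simp only [hB', coordCLM_apply, hb', Fin.snoc_castSucc]
      rw [hW₁ ω, hμ₁]
      ring
    have hFX : ∀ ω, F (X ω) = (W₁ ⁻¹' S).indicator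
        (fun ω' => (⟪u, V ω'⟫ : ℝ) - ⟪u, μ0⟫) ω := by
      intro ω
      have hproj : (WithLp.toLp 2 (fun i : Fin d => X ω (Fin.castSucc i) + μ₁ i : Fin d → ℝ) :
          EuclideanSpace ℝ (Fin d)) = W₁ ω := by ext i; exact hXcast ω i
      rw [hF]
      simp only [hproj, hXlast ω]
      by_cases hmem : ω ∈ W₁ ⁻¹' S
      · rw [Set.indicator_of_mem hmem, Set.indicator_of_mem (Set.mem_preimage.mp hmem), mul_one]
      · rw [Set.indicator_of_notMem hmem,
          Set.indicator_of_notMem (fun hc => hmem (Set.mem_preimage.mpr hc)), mul_zero]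
    have hFX' : ∀ ω, F (X' ω) = -(F (X ω)) := by
      intro ω
      have hproj' : (WithLp.toLp 2 (fun i : Fin d => X' ω (Fin.castSucc i) + μ₁ i : Fin d → ℝ) :
          EuclideanSpace ℝ (Fin d)) = W₁ ω := by ext i; exact hX'cast ω i
      have hproj : (WithLp.toLp 2 (fun i : Fin d => X ω (Fin.castSucc i) + μ₁ i : Fin d → ℝ) :
          EuclideanSpace ℝ (Fin d)) = W₁ ω := by ext i; exact hXcast ω i
      rw [hF]
      simp only [hproj, hproj', hXlast ω, hX'last ω]
      ring
    have hint1 : ∫ ω, F (X ω) ∂P = ∫ ω, F (X' ω) ∂P := by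
      rw [← integral_map hXm.aemeasurable (hFm.stronglyMeasurable.aestronglyMeasurable),
        ← integral_map hX'm.aemeasurable (hFm.stronglyMeasurable.aestronglyMeasurable), hlaw]
    have hzero : ∫ ω, F (X ω) ∂P = 0 := by
      have h2 : ∫ ω, F (X' ω) ∂P = -∫ ω, F (X ω) ∂P := by
        rw [← integral_neg]
        exact integral_congr_ae (Filter.Eventually.of_forall fun ω => hFX' ω)
      have := hint1.trans h2
      linarith
    calc ∫ ω in W₁ ⁻¹' S, ((⟪u, V ω⟫ : ℝ) - ⟪u, μ0⟫) ∂P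
        = ∫ ω, (W₁ ⁻¹' S).indicator (fun ω' => (⟪u, V ω'⟫ : ℝ) - ⟪u, μ0⟫) ω ∂P :=
          (integral_indicator (hW₁m hS)).symm
      _ = ∫ ω, F (X ω) ∂P :=
          integral_congr_ae (Filter.Eventually.of_forall fun ω => (hFX ω).symm)
      _ = 0 := hzero
  -- conclude via the characterization of conditional expectation
  have hcondexp : (fun _ : Ω => μ₂) =ᵐ[P] P[V₂ | MeasurableSpace.comap W₁ inferInstance] := by
    refine ae_eq_condExp_of_forall_setIntegral_eq hm hV₂int
      (fun s _ _ => (integrable_const μ₂).integrableOn) ?_ ?_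
    · intro s hs _
      obtain ⟨S, hSmeas, rfl⟩ := hs
      -- show the set integrals agree
      refine (ext_inner_left ℝ fun c => ?_)
      set c' : H := c - ∑ i : Fin d, ((⟪φ (i : ℕ), c⟫ : ℝ)) • φ (i : ℕ) with hc'
      have hc'perp : ∀ i : Fin d, (⟪φ (i : ℕ), c'⟫ : ℝ) = 0 := hperp c
      have e1 : ∀ ω, (⟪c, V₂ ω⟫ : ℝ)
          = ((⟪c', V ω⟫ : ℝ) - ⟪c', μ0⟫) + ⟪c, μ₂⟫ := by
        intro ω
        have h1 : (⟪c, V₂ ω⟫ : ℝ) = ⟪c', V ω⟫ := by rw [hV₂ ω, hswap c (V ω)]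
        have h2 : (⟪c, μ₂⟫ : ℝ) = ⟪c', μ0⟫ := by rw [hμ₂, hswap c μ0]
        rw [h1, h2]
        ring
      have hZint : Integrable (fun ω => (⟪c', V ω⟫ : ℝ) - ⟪c', μ0⟫) P :=
        (hintInner c').sub (integrable_const _)
      have hmain : (⟪c, ∫ ω in W₁ ⁻¹' S, V₂ ω ∂P⟫ : ℝ)
          = ⟪c, ∫ _ω in W₁ ⁻¹' S, μ₂ ∂P⟫ :=
        calc (⟪c, ∫ ω in W₁ ⁻¹' S, V₂ ω ∂P⟫ : ℝ)
          = ∫ ω in W₁ ⁻¹' S, (⟪c, V₂ ω⟫ : ℝ) ∂P :=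
            (integral_inner hV₂int.restrict c).symm
        _ = ∫ ω in W₁ ⁻¹' S, (((⟪c', V ω⟫ : ℝ) - ⟪c', μ0⟫) + ⟪c, μ₂⟫) ∂P :=
            integral_congr_ae (Filter.Eventually.of_forall fun ω => e1 ω)
        _ = (∫ ω in W₁ ⁻¹' S, ((⟪c', V ω⟫ : ℝ) - ⟪c', μ0⟫) ∂P)
            + ∫ _ω in W₁ ⁻¹' S, (⟪c, μ₂⟫ : ℝ) ∂P :=
            integral_add hZint.restrict (integrable_const _)
        _ = (P (W₁ ⁻¹' S)).toReal * ⟪c, μ₂⟫ := by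
            rw [hkey c' hc'perp S hSmeas, setIntegral_const, zero_add, smul_eq_mul]; rfl
        _ = ⟪c, ∫ _ω in W₁ ⁻¹' S, μ₂ ∂P⟫ := by
            rw [setIntegral_const, real_inner_smul_right]; rfl
      exact hmain.symm
    · exact MeasureTheory.StronglyMeasurable.aestronglyMeasurable
        (@stronglyMeasurable_const _ _ (MeasurableSpace.comap W₁ inferInstance) _ _)
  have hfun : (fun ω => μ₂ + Γcross (WithLp.toLp 2 fun i : Fin d => (W₁ ω i - μ₁ i) / lam (i : ℕ)))
      = fun _ : Ω => μ₂ := by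
    funext ω
    rw [hΓ0, add_zero]
  rw [hfun]
  exact hcondexp.symm
end
end

section
/- Let V be a random element in a separable Hilbert space H with finite second moment. If {ξ₁, ..., ξ_k} is a set of k principal points of V, then {ξ₁, ..., ξ_k} is self-consistent for V. -/
open MeasureTheory ProbabilityTheory
open scoped RealInnerProductSpace

noncomputable section

variable {Ω : Type*} [MeasurableSpace Ω]

/-- Principal points of a random element with finite second moment are self-consistent. -/
theorem selfConsistent_of_isPrincipal {H : Type*}
    [NormedAddCommGroup H] [InnerProductSpace ℝ H] [CompleteSpace H]
    [SecondCountableTopology H] [MeasurableSpace H] [BorelSpace H]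
    (P : Measure Ω) [IsProbabilityMeasure P]
    (V : Ω → H) (hmeas : Measurable V)
    (hm2 : Integrable (fun ω => ‖V ω‖ ^ 2) P)
    {k : ℕ} (ξ : Fin k → H)
    (hpp : IsPrincipal P V ξ) :
    SelfConsistent P V ξ := by
  intro j
  haveI : Nonempty (Fin k) := ⟨j⟩
  set A : Set Ω := V ⁻¹' attractionDomain ξ j with hAdef
  have hmℓ : ∀ c : H, Measurable fun ω => ‖V ω - c‖ :=
    fun c => (hmeas.sub measurable_const).norm
  have hA : MeasurableSet A := by
    have hAeq : A = (⋂ ℓ, {ω | ‖V ω - ξ j‖ ≤ ‖V ω - ξ ℓ‖}) ∩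
        ⋂ ℓ, ⋂ (_ : ℓ < j), {ω | ‖V ω - ξ j‖ < ‖V ω - ξ ℓ‖} := by
      ext ω
      simp [hAdef, attractionDomain, Set.mem_iInter, Set.mem_preimage]
    rw [hAeq]
    exact (MeasurableSet.iInter fun ℓ => measurableSet_le (hmℓ (ξ j)) (hmℓ (ξ ℓ))).inter
      (MeasurableSet.iInter fun ℓ => MeasurableSet.iInter fun _ =>
        measurableSet_lt (hmℓ (ξ j)) (hmℓ (ξ ℓ)))
  have hVm : AEStronglyMeasurable V P := hmeas.aestronglyMeasurable
  have hV1 : Integrable V P := by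
    refine Integrable.mono' (hm2.add (integrable_const 1)) hVm ?_
    filter_upwards with ω
    simp only [Pi.add_apply]
    nlinarith [norm_nonneg (V ω), sq_nonneg (‖V ω‖ - 1)]
  have hsq : ∀ c : H, Integrable (fun ω => ‖V ω - c‖ ^ 2) P := by
    intro c
    refine Integrable.mono' ((hm2.const_mul 2).add (integrable_const (2 * ‖c‖ ^ 2)))
      (((hmeas.sub measurable_const).norm.pow_const 2).aestronglyMeasurable) ?_
    filter_upwards with ω
    have h1 : ‖V ω - c‖ ≤ ‖V ω‖ + ‖c‖ := norm_sub_le _ _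
    have h2 : (0:ℝ) ≤ ‖V ω - c‖ := norm_nonneg _
    simp only [Pi.add_apply, Real.norm_eq_abs, abs_of_nonneg (sq_nonneg ‖V ω - c‖)]
    nlinarith [norm_nonneg (V ω), norm_nonneg c, sq_nonneg (‖V ω‖ - ‖c‖),
      pow_le_pow_left₀ h2 h1 2]
  have hbd : ∀ (x : H) (z : Fin k → H), BddBelow (Set.range fun ℓ => ‖x - z ℓ‖) :=
    fun x z => (Set.finite_range _).bddBelow
  have hinf0 : ∀ (x : H) (z : Fin k → H), (0:ℝ) ≤ ⨅ ℓ, ‖x - z ℓ‖ :=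
    fun x z => le_ciInf fun ℓ => norm_nonneg _
  have hinf : ∀ z : Fin k → H, Integrable (fun ω => (⨅ ℓ, ‖V ω - z ℓ‖) ^ 2) P := by
    intro z
    refine Integrable.mono' (hsq (z j))
      (((Measurable.iInf fun ℓ => hmℓ (z ℓ)).pow_const 2).aestronglyMeasurable) ?_
    filter_upwards with ω
    have h1 : (⨅ ℓ, ‖V ω - z ℓ‖) ≤ ‖V ω - z j‖ := ciInf_le (hbd _ _) j
    have h0 := hinf0 (V ω) z
    rw [Real.norm_eq_abs, abs_of_nonneg (by positivity)]
    exact pow_le_pow_left₀ h0 h1 2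
  -- key: ξ j minimizes y ↦ ∫_A ‖V - y‖²
  have key : ∀ y : H, ∫ ω in A, ‖V ω - ξ j‖ ^ 2 ∂P ≤ ∫ ω in A, ‖V ω - y‖ ^ 2 ∂P := by
    intro y
    set z := Function.update ξ j y with hz
    have hfin : ∀ ω ∈ A, (⨅ ℓ, ‖V ω - ξ ℓ‖) = ‖V ω - ξ j‖ := fun ω hω =>
      le_antisymm (ciInf_le (hbd _ _) j) (le_ciInf fun ℓ => hω.1 ℓ)
    have honA : ∀ ω ∈ A, (⨅ ℓ, ‖V ω - z ℓ‖) ^ 2 ≤ ‖V ω - y‖ ^ 2 := by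
      intro ω _
      have h1 : (⨅ ℓ, ‖V ω - z ℓ‖) ≤ ‖V ω - y‖ := by
        have h := ciInf_le (hbd (V ω) z) j
        rwa [hz, Function.update_self] at h
      exact pow_le_pow_left₀ (hinf0 _ _) h1 2
    have hoffA : ∀ ω ∈ Aᶜ, (⨅ ℓ, ‖V ω - z ℓ‖) ^ 2 ≤ (⨅ ℓ, ‖V ω - ξ ℓ‖) ^ 2 := by
      intro ω hω
      obtain ⟨ℓ0, hℓ0⟩ := Finite.exists_min fun ℓ => ‖V ω - ξ ℓ‖
      have hinfeq : (⨅ ℓ, ‖V ω - ξ ℓ‖) = ‖V ω - ξ ℓ0‖ :=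
        le_antisymm (ciInf_le (hbd _ _) ℓ0) (le_ciInf hℓ0)
      obtain ⟨ℓ1, hne, hle⟩ : ∃ ℓ1, ℓ1 ≠ j ∧ ‖V ω - ξ ℓ1‖ ≤ ⨅ ℓ, ‖V ω - ξ ℓ‖ := by
        by_cases hj : ℓ0 = j
        · subst hj
          have hω' : ¬ (V ω ∈ attractionDomain ξ ℓ0) := hω
          simp only [attractionDomain, Set.mem_setOf_eq, not_and, not_forall, not_lt] at hω'
          obtain ⟨ℓ1, hlt, hge⟩ := hω' hℓ0
          exact ⟨ℓ1, ne_of_lt hlt, by rw [hinfeq]; exact hge⟩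
        · exact ⟨ℓ0, hj, hinfeq.ge⟩
      have h2 : (⨅ ℓ, ‖V ω - z ℓ‖) ≤ ⨅ ℓ, ‖V ω - ξ ℓ‖ := by
        calc (⨅ ℓ, ‖V ω - z ℓ‖) ≤ ‖V ω - z ℓ1‖ := ciInf_le (hbd _ _) ℓ1
          _ = ‖V ω - ξ ℓ1‖ := by rw [hz, Function.update_of_ne hne]
          _ ≤ _ := hle
      exact pow_le_pow_left₀ (hinf0 _ _) h2 2
    have hsplit1 : ∫ ω, (⨅ ℓ, ‖V ω - ξ ℓ‖) ^ 2 ∂P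
        = (∫ ω in A, ‖V ω - ξ j‖ ^ 2 ∂P) + ∫ ω in Aᶜ, (⨅ ℓ, ‖V ω - ξ ℓ‖) ^ 2 ∂P := by
      rw [← integral_add_compl hA (hinf ξ)]
      congr 1
      exact setIntegral_congr_fun hA (fun ω hω => by rw [hfin ω hω])
    have hsplit2 : ∫ ω, (⨅ ℓ, ‖V ω - z ℓ‖) ^ 2 ∂P
        ≤ (∫ ω in A, ‖V ω - y‖ ^ 2 ∂P) + ∫ ω in Aᶜ, (⨅ ℓ, ‖V ω - ξ ℓ‖) ^ 2 ∂P := by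
      rw [← integral_add_compl hA (hinf z)]
      refine add_le_add ?_ ?_
      · exact setIntegral_mono_on (hinf z).integrableOn (hsq y).integrableOn hA honA
      · exact setIntegral_mono_on (hinf z).integrableOn (hinf ξ).integrableOn hA.compl hoffA
    have := hpp z
    linarith
  -- conclude: the conditional mean over A is ξ j
  have hVjint : Integrable (fun ω => V ω - ξ j) P := hV1.sub (integrable_const _)
  set m : H := ∫ ω in A, (V ω - ξ j) ∂P with hm
  have hinner : ∫ ω in A, (⟪m, V ω - ξ j⟫ : ℝ) ∂P = ‖m‖ ^ 2 := by
    rw [integral_inner (hVjint.integrableOn (s := A)), ← hm, real_inner_self_eq_norm_sq]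
  have hexp : ∫ ω in A, ‖V ω - (ξ j + m)‖ ^ 2 ∂P
      = (∫ ω in A, ‖V ω - ξ j‖ ^ 2 ∂P) - 2 * ‖m‖ ^ 2 + (P A).toReal * ‖m‖ ^ 2 := by
    have h1 : ∀ ω, ‖V ω - (ξ j + m)‖ ^ 2
        = ‖V ω - ξ j‖ ^ 2 - 2 * (⟪m, V ω - ξ j⟫ : ℝ) + ‖m‖ ^ 2 := by
      intro ω
      rw [show V ω - (ξ j + m) = (V ω - ξ j) - m by abel, norm_sub_sq_real,
        real_inner_comm]
    simp_rw [h1]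
    have hI1 : IntegrableOn (fun ω => ‖V ω - ξ j‖ ^ 2) A P := (hsq _).integrableOn
    have hI2 : IntegrableOn (fun ω => (⟪m, V ω - ξ j⟫ : ℝ)) A P :=
      ((innerSL ℝ m).integrable_comp hVjint).integrableOn
    have hI2' : IntegrableOn (fun ω => 2 * (⟪m, V ω - ξ j⟫ : ℝ)) A P := hI2.const_mul 2
    have hI12 : IntegrableOn
        (fun ω => ‖V ω - ξ j‖ ^ 2 - 2 * (⟪m, V ω - ξ j⟫ : ℝ)) A P := hI1.sub hI2'
    rw [integral_add hI12 (integrableOn_const (measure_ne_top _ _)),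
      integral_sub hI1 hI2', integral_const_mul, hinner,
      setIntegral_const, smul_eq_mul]
    rfl
  have hmzero : m = 0 := by
    have hk := key (ξ j + m)
    have hPA : (P A).toReal ≤ 1 := by
      rw [← ENNReal.toReal_one]
      exact ENNReal.toReal_mono ENNReal.one_ne_top prob_le_one
    rw [hexp] at hk
    have : ‖m‖ ^ 2 ≤ 0 := by nlinarith [sq_nonneg ‖m‖]
    have : ‖m‖ = 0 := by nlinarith [norm_nonneg m, sq_nonneg ‖m‖]
    exact norm_eq_zero.mp this
  have hfinal : ∫ ω in A, (V ω - ξ j) ∂P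
      = (∫ ω in A, V ω ∂P) - (P A).toReal • ξ j := by
    rw [integral_sub hV1.integrableOn
      ((integrable_const (ξ j)).integrableOn), setIntegral_const]
    rfl
  rw [← hm, hmzero] at hfinal
  have := hfinal.symm
  rw [sub_eq_zero] at this
  exact this
end
end

section
/- Let V be a random element of a separable Hilbert space H with finite second moment and V₂ = ν + ρ·UV with ν ∈ H, ρ a scalar, and U : H → H unitary. If {y₁,...,y_k} is a set of k principal points of V, then {ν + ρUy₁, ..., ν + ρUy_k} is a set of k principal points of V₂, and E(d²(V₂, {ν + ρUy_j}_j)) = ρ² E(d²(V, {y_j}_j)). -/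
open MeasureTheory ProbabilityTheory
open scoped RealInnerProductSpace

noncomputable section

variable {Ω : Type*} [MeasurableSpace Ω]

/-- Principal points transform under `V₂ = ν + ρ • U V` with `U` unitary, and the minimal
expected squared distance scales by `ρ²`. -/
theorem isPrincipal_affine_unitary {H : Type*}
    [NormedAddCommGroup H] [InnerProductSpace ℝ H] [CompleteSpace H]
    [SecondCountableTopology H]
    (P : Measure Ω) [IsProbabilityMeasure P]
    (V : Ω → H) (hm2 : Integrable (fun ω => ‖V ω‖ ^ 2) P)
    (ν : H) (ρ : ℝ) (U : H ≃ₗᵢ[ℝ] H)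
    {k : ℕ} (y : Fin k → H)
    (hpp : IsPrincipal P V y) :
    IsPrincipal P (fun ω => ν + ρ • U (V ω)) (fun j => ν + ρ • U (y j)) ∧
      (∫ ω, (⨅ j, ‖(ν + ρ • U (V ω)) - (ν + ρ • U (y j))‖) ^ 2 ∂P)
        = ρ ^ 2 * ∫ ω, (⨅ j, ‖V ω - y j‖) ^ 2 ∂P := by
  have key : ∀ (c : Fin k → H) (x : H),
      (⨅ j, ‖(ν + ρ • U x) - (ν + ρ • U (c j))‖) ^ 2 = ρ ^ 2 * (⨅ j, ‖x - c j‖) ^ 2 := by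
    intro c x
    have h1 : ∀ j, ‖(ν + ρ • U x) - (ν + ρ • U (c j))‖ = |ρ| * ‖x - c j‖ := by
      intro j
      have : (ν + ρ • U x) - (ν + ρ • U (c j)) = ρ • U (x - c j) := by
        simp [smul_sub]
      rw [this, norm_smul, U.norm_map, Real.norm_eq_abs]
    have h2 : (⨅ j, ‖(ν + ρ • U x) - (ν + ρ • U (c j))‖) = |ρ| * ⨅ j, ‖x - c j‖ := by
      simp_rw [h1]
      exact (Real.mul_iInf_of_nonneg (abs_nonneg ρ) _).symm
    rw [h2, mul_pow, sq_abs]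
  have int_eq : ∀ c : Fin k → H,
      (∫ ω, (⨅ j, ‖(ν + ρ • U (V ω)) - (ν + ρ • U (c j))‖) ^ 2 ∂P)
        = ρ ^ 2 * ∫ ω, (⨅ j, ‖V ω - c j‖) ^ 2 ∂P := by
    intro c
    simp_rw [key c]
    rw [MeasureTheory.integral_const_mul]
  refine ⟨?_, int_eq y⟩
  intro z
  by_cases hρ : ρ = 0
  · have hL : (∫ ω, (⨅ j, ‖(ν + ρ • U (V ω)) - (ν + ρ • U (y j))‖) ^ 2 ∂P) = 0 := by
      rw [int_eq y, hρ]; ring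
    rw [show (fun ω => ν + ρ • U (V ω)) = fun ω => (ν + ρ • U (V ω)) from rfl, hL]
    exact integral_nonneg fun ω => sq_nonneg _
  · set w : Fin k → H := fun j => U.symm (ρ⁻¹ • (z j - ν)) with hw
    have hz : ∀ j, z j = ν + ρ • U (w j) := by
      intro j
      simp [hw, smul_smul, mul_inv_cancel₀ hρ]
    have hRHS : (∫ ω, (⨅ j, ‖(ν + ρ • U (V ω)) - z j‖) ^ 2 ∂P)
        = ρ ^ 2 * ∫ ω, (⨅ j, ‖V ω - w j‖) ^ 2 ∂P := by
      simp_rw [fun j => hz j]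
      exact int_eq w
    calc (∫ ω, (⨅ j, ‖(ν + ρ • U (V ω)) - (ν + ρ • U (y j))‖) ^ 2 ∂P)
        = ρ ^ 2 * ∫ ω, (⨅ j, ‖V ω - y j‖) ^ 2 ∂P := int_eq y
      _ ≤ ρ ^ 2 * ∫ ω, (⨅ j, ‖V ω - w j‖) ^ 2 ∂P :=
          mul_le_mul_of_nonneg_left (hpp w) (sq_nonneg ρ)
      _ = ∫ ω, (⨅ j, ‖(ν + ρ • U (V ω)) - z j‖) ^ 2 ∂P := hRHS.symm
end
end

section
/- Let W be a best k-point approximation to a random element V in a separable Hilbert space, with support {y₁,...,y_k}, and let D_j be the domain of attraction of y_j. Then: (a) almost surely, W = Σ_j y_j·1_{V ∈ D_j}; (b) ‖V − W‖ ≤ ‖V − y_j‖ a.s. for every j; (c) E(V | W) = W a.s., i.e., W is self-consistent for V. -/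
open MeasureTheory ProbabilityTheory
open scoped RealInnerProductSpace

noncomputable section

variable {Ω : Type*} [MeasurableSpace Ω]

section AuxLemmas

variable {H : Type*} [NormedAddCommGroup H]

lemma attraction_existsUnique {k : ℕ} (hk : 0 < k) (y : Fin k → H) (x : H) :
    ∃! j, x ∈ attractionDomain y j := by
  classical
  haveI : Nonempty (Fin k) := ⟨⟨0, hk⟩⟩
  set T : Finset (Fin k) :=
    Finset.univ.filter (fun j : Fin k => ∀ ℓ, ‖x - y j‖ ≤ ‖x - y ℓ‖) with hT
  have hTne : T.Nonempty := by
    obtain ⟨j, -, hj⟩ := Finset.exists_min_image Finset.univ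
      (fun j : Fin k => ‖x - y j‖) Finset.univ_nonempty
    refine ⟨j, ?_⟩
    simp only [hT, Finset.mem_filter]
    exact ⟨Finset.mem_univ _, fun ℓ => hj ℓ (Finset.mem_univ _)⟩
  set j0 := T.min' hTne with hj0
  have hj0T : j0 ∈ T := T.min'_mem hTne
  have hj0min : ∀ ℓ, ‖x - y j0‖ ≤ ‖x - y ℓ‖ := by
    simpa [hT, Finset.mem_filter] using hj0T
  have hmem : x ∈ attractionDomain y j0 := by
    refine ⟨hj0min, fun ℓ hℓ => ?_⟩
    have hℓT : ℓ ∉ T := fun hin => absurd (T.min'_le ℓ hin) (not_le.mpr hℓ)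
    have hnot : ¬∀ m, ‖x - y ℓ‖ ≤ ‖x - y m‖ := by
      simpa [hT, Finset.mem_filter] using hℓT
    push_neg at hnot
    obtain ⟨m, hm⟩ := hnot
    exact lt_of_le_of_lt (hj0min m) hm
  refine ⟨j0, hmem, fun j hj => ?_⟩
  rcases lt_trichotomy j j0 with h | h | h
  · exact absurd (hmem.2 j h) (not_lt.mpr (hj.1 j0))
  · exact h
  · exact absurd (hj.2 j0 h) (not_lt.mpr (hmem.1 j))

lemma attraction_sum_eq {k : ℕ} (hk : 0 < k) (y : Fin k → H) (x : H) {j : Fin k}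
    (hj : x ∈ attractionDomain y j) :
    ∑ i, (attractionDomain y i).indicator (fun _ => y i) x = y j := by
  classical
  rw [Finset.sum_eq_single j]
  · exact Set.indicator_of_mem hj _
  · intro i _ hij
    exact Set.indicator_of_notMem
      (fun hi => hij ((attraction_existsUnique hk y x).unique hi hj)) _
  · exact fun h => absurd (Finset.mem_univ _) h

lemma setIntegral_partition {Ω E : Type*} [MeasurableSpace Ω] {P : MeasureTheory.Measure Ω}
    [NormedAddCommGroup E] [NormedSpace ℝ E] {k : ℕ} {A : Fin k → Set Ω}
    (hA : ∀ j, MeasurableSet (A j)) (hdisj : Pairwise (Function.onFun Disjoint A))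
    (hcov : (⋃ j, A j) = Set.univ) {g : Ω → E} {s : Set Ω} (hs : MeasurableSet s)
    (hg : MeasureTheory.IntegrableOn g s P) :
    ∫ ω in s, g ω ∂P = ∑ j, ∫ ω in s ∩ A j, g ω ∂P := by
  have hsu : s = ⋃ j, s ∩ A j := by
    rw [← Set.inter_iUnion, hcov, Set.inter_univ]
  have hd : Pairwise (Function.onFun Disjoint fun j => s ∩ A j) :=
    fun i j hij => (hdisj hij).mono Set.inter_subset_right Set.inter_subset_right
  calc ∫ ω in s, g ω ∂P = ∫ ω in ⋃ j, s ∩ A j, g ω ∂P := by rw [← hsu]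
    _ = ∑' j, ∫ ω in s ∩ A j, g ω ∂P :=
        MeasureTheory.integral_iUnion (fun j => hs.inter (hA j)) hd (by rw [← hsu]; exact hg)
    _ = ∑ j, ∫ ω in s ∩ A j, g ω ∂P := tsum_fintype _

end AuxLemmas

/-- Properties of a best `k`-point approximation `W` to `V`: (a) `W = ∑ⱼ yⱼ 1_{V ∈ Dⱼ}` a.s.;
(b) `‖V − W‖ ≤ ‖V − yⱼ‖` a.s. for every `j`; (c) `E(V | W) = W` a.s. -/
theorem best_approx_selfConsistent {H : Type*}
    [NormedAddCommGroup H] [InnerProductSpace ℝ H] [CompleteSpace H]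
    [SecondCountableTopology H] [MeasurableSpace H] [BorelSpace H]
    (P : Measure Ω) [IsProbabilityMeasure P]
    (V W : Ω → H) (hmeasV : Measurable V) (hmeasW : Measurable W)
    (hIntV : Integrable V P)
    (hm2 : Integrable (fun ω => ‖V ω‖ ^ 2) P)
    {k : ℕ} (y : Fin k → H) (hy : Function.Injective y)
    -- `W` takes exactly the values `y 0, …, y (k-1)`
    (hWval : ∀ ω, ∃ j, W ω = y j)
    (hWsupp : ∀ j, P {ω | W ω = y j} ≠ 0)
    -- `W` is a best `k`-point approximation to `V`
    (hbest : ∀ Z : Ω → H, Measurable Z →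
      (∃ S : Finset H, S.card ≤ k ∧ ∀ ω, Z ω ∈ S) →
      (∫ ω, ‖V ω - W ω‖ ^ 2 ∂P) ≤ ∫ ω, ‖V ω - Z ω‖ ^ 2 ∂P)
    -- the boundaries of the domains of attraction are null for `V`
    (hbd : P {ω | ∃ i j, i ≠ j ∧ ‖V ω - y i‖ = ‖V ω - y j‖} = 0) :
    (∀ᵐ ω ∂P, W ω
        = ∑ j, (attractionDomain y j).indicator (fun _ => y j) (V ω)) ∧
    (∀ᵐ ω ∂P, ∀ j, ‖V ω - W ω‖ ≤ ‖V ω - y j‖) ∧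
    (P[V | MeasurableSpace.comap W inferInstance] =ᵐ[P] W) := by
  classical
  -- basic setup
  have hΩ : Nonempty Ω := by
    by_contra h
    rw [not_nonempty_iff] at h
    have h1 : (P Set.univ) = 1 := measure_univ
    rw [Set.univ_eq_empty_iff.mpr h, measure_empty] at h1
    exact zero_ne_one h1
  have hk : 0 < k := (hWval (Classical.choice hΩ)).choose.pos
  haveI : Nonempty (Fin k) := ⟨⟨0, hk⟩⟩
  -- the nearest-point map
  choose n hn using fun x => (attraction_existsUnique hk y x).exists
  set f : H → H := fun x => ∑ j, (attractionDomain y j).indicator (fun _ => y j) x with hfdef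
  have hfn : ∀ x, f x = y (n x) := fun x => attraction_sum_eq hk y x (hn x)
  have hfmin : ∀ x (j : Fin k), ‖x - f x‖ ≤ ‖x - y j‖ := by
    intro x j
    rw [hfn x]
    exact (hn x).1 j
  -- measurability of the domains and of f
  have hDmeas : ∀ j, MeasurableSet (attractionDomain y j) := by
    intro j
    have hle : ∀ i : Fin k, MeasurableSet {x : H | ‖x - y j‖ ≤ ‖x - y i‖} :=
      fun i => measurableSet_le ((continuous_id.sub continuous_const).norm).measurable
        ((continuous_id.sub continuous_const).norm).measurable
    have hlt : ∀ i : Fin k, MeasurableSet {x : H | ‖x - y j‖ < ‖x - y i‖} :=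
      fun i => measurableSet_lt ((continuous_id.sub continuous_const).norm).measurable
        ((continuous_id.sub continuous_const).norm).measurable
    have heq : attractionDomain y j =
        (⋂ i, {x : H | ‖x - y j‖ ≤ ‖x - y i‖}) ∩
          ⋂ i, ⋂ (_ : i < j), {x : H | ‖x - y j‖ < ‖x - y i‖} := by
      ext x
      simp only [attractionDomain, Set.mem_setOf_eq, Set.mem_inter_iff, Set.mem_iInter]
    rw [heq]
    exact (MeasurableSet.iInter hle).inter
      (MeasurableSet.iInter fun i => MeasurableSet.iInter fun _ => hlt i)
  have hfmeas : Measurable f :=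
    Finset.measurable_sum _ fun j _ => measurable_const.indicator (hDmeas j)
  -- uniform bound
  set M : ℝ := Finset.univ.sup' Finset.univ_nonempty (fun j : Fin k => ‖y j‖) with hM
  have hMy : ∀ j, ‖y j‖ ≤ M := fun j => by rw [hM]; exact Finset.le_sup' (fun j : Fin k => ‖y j‖) (Finset.mem_univ j)
  -- integrability helper
  have hIntSq : ∀ (Z : Ω → H) (C : ℝ), Measurable Z → (∀ ω, ‖Z ω‖ ≤ C) →
      Integrable (fun ω => ‖V ω - Z ω‖ ^ 2) P := by
    intro Z C hZm hZb
    have hams : AEStronglyMeasurable (fun ω => ‖V ω - Z ω‖ ^ 2) P :=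
      (((hmeasV.sub hZm).norm).pow_const 2).aestronglyMeasurable
    refine Integrable.mono' (g := fun ω => ‖V ω‖ ^ 2 + 2 * C * ‖V ω‖ + C ^ 2)
      ((hm2.add (hIntV.norm.const_mul (2 * C))).add (integrable_const _)) hams ?_
    filter_upwards with ω
    have h1 : ‖V ω - Z ω‖ ≤ ‖V ω‖ + C := (norm_sub_le _ _).trans (by gcongr; exact hZb ω)
    have h2 : ‖V ω - Z ω‖ ^ 2 ≤ (‖V ω‖ + C) ^ 2 := by
      apply pow_le_pow_left₀ (norm_nonneg _) h1
    calc ‖‖V ω - Z ω‖ ^ 2‖ = ‖V ω - Z ω‖ ^ 2 := by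
          rw [Real.norm_eq_abs, abs_of_nonneg (sq_nonneg _)]
      _ ≤ (‖V ω‖ + C) ^ 2 := h2
      _ = ‖V ω‖ ^ 2 + 2 * C * ‖V ω‖ + C ^ 2 := by ring
  -- Step A : a.e., W ω = f (V ω)
  have hZmeas : Measurable (fun ω => f (V ω)) := hfmeas.comp hmeasV
  have hZfin : ∃ S : Finset H, S.card ≤ k ∧ ∀ ω, f (V ω) ∈ S := by
    refine ⟨Finset.univ.image y, (Finset.card_image_le).trans (by simp), fun ω => ?_⟩
    rw [hfn]
    exact Finset.mem_image_of_mem y (Finset.mem_univ _)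
  have hle := hbest (fun ω => f (V ω)) hZmeas hZfin
  have hIW : Integrable (fun ω => ‖V ω - W ω‖ ^ 2) P :=
    hIntSq W M hmeasW (fun ω => by obtain ⟨j, hj⟩ := hWval ω; rw [hj]; exact hMy j)
  have hIZ : Integrable (fun ω => ‖V ω - f (V ω)‖ ^ 2) P :=
    hIntSq (fun ω => f (V ω)) M hZmeas (fun ω => by show ‖f (V ω)‖ ≤ M; rw [hfn]; exact hMy _)
  have h0 : ∀ ω, 0 ≤ ‖V ω - W ω‖ ^ 2 - ‖V ω - f (V ω)‖ ^ 2 := by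
    intro ω
    obtain ⟨j, hj⟩ := hWval ω
    have h1 : ‖V ω - f (V ω)‖ ≤ ‖V ω - W ω‖ := by rw [hj]; exact hfmin (V ω) j
    have := pow_le_pow_left₀ (norm_nonneg (V ω - f (V ω))) h1 2
    linarith
  have hdiffae : ∀ᵐ ω ∂P, ‖V ω - W ω‖ ^ 2 - ‖V ω - f (V ω)‖ ^ 2 = 0 := by
    have hint : Integrable (fun ω => ‖V ω - W ω‖ ^ 2 - ‖V ω - f (V ω)‖ ^ 2) P := hIW.sub hIZ
    have hz : ∫ ω, (‖V ω - W ω‖ ^ 2 - ‖V ω - f (V ω)‖ ^ 2) ∂P = 0 := by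
      rw [integral_sub hIW hIZ]
      have h2 : ∫ ω, ‖V ω - W ω‖ ^ 2 ∂P ≤ ∫ ω, ‖V ω - f (V ω)‖ ^ 2 ∂P := hle
      have h3 : ∫ ω, ‖V ω - f (V ω)‖ ^ 2 ∂P ≤ ∫ ω, ‖V ω - W ω‖ ^ 2 ∂P := by
        apply integral_mono hIZ hIW
        intro ω
        have := h0 ω
        simpa using by linarith
      linarith
    have := (integral_eq_zero_iff_of_nonneg h0 hint).mp hz
    filter_upwards [this] with ω hω using hω
  have hbd' : ∀ᵐ ω ∂P, ¬∃ i j, i ≠ j ∧ ‖V ω - y i‖ = ‖V ω - y j‖ := by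
    rw [ae_iff]
    simpa [not_not] using hbd
  have hWf : ∀ᵐ ω ∂P, W ω = f (V ω) := by
    filter_upwards [hdiffae, hbd'] with ω h1 h2
    obtain ⟨j, hj⟩ := hWval ω
    have hsq : ‖V ω - W ω‖ ^ 2 = ‖V ω - f (V ω)‖ ^ 2 := by linarith
    have hnorm : ‖V ω - W ω‖ = ‖V ω - f (V ω)‖ := by
      have e1 : ‖V ω - W ω‖ = Real.sqrt (‖V ω - W ω‖ ^ 2) := (Real.sqrt_sq (norm_nonneg _)).symm
      rw [e1, hsq, Real.sqrt_sq (norm_nonneg _)]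
    rw [hj, hfn] at hnorm ⊢
    by_cases hjj : j = n (V ω)
    · rw [hjj]
    · exact absurd ⟨j, n (V ω), hjj, hnorm⟩ h2
  refine ⟨?_, ?_, ?_⟩
  · filter_upwards [hWf] with ω h
    rw [h, hfdef]
  · filter_upwards [hWf] with ω h j
    rw [h]
    exact hfmin (V ω) j
  -- Part (c)
  set A : Fin k → Set Ω := fun j => {ω | W ω = y j} with hA
  have hAmeas : ∀ j, MeasurableSet (A j) := fun j => hmeasW (measurableSet_singleton (y j))
  have hAdisj : Pairwise (Function.onFun Disjoint A) := by
    intro i j hij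
    rw [Function.onFun, Set.disjoint_left]
    intro ω h1 h2
    exact hij (hy ((h1 : W ω = y i).symm.trans h2))
  have hAcov : (⋃ j, A j) = Set.univ := by
    ext ω
    simp only [Set.mem_iUnion, Set.mem_univ, iff_true]
    exact hWval ω
  have hsum_eq : ∀ (g : Fin k → H) (ω : Ω) (j : Fin k), ω ∈ A j →
      ∑ i, (A i).indicator (fun _ => g i) ω = g j := by
    intro g ω j hj
    rw [Finset.sum_eq_single j]
    · exact Set.indicator_of_mem hj _
    · intro i _ hij
      apply Set.indicator_of_notMem
      intro hi
      exact hij (hy ((hi : W ω = y i).symm.trans hj))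
    · exact fun h => absurd (Finset.mem_univ _) h
  have hWeq : W = fun ω => ∑ i, (A i).indicator (fun _ => y i) ω := by
    funext ω
    obtain ⟨j, hj⟩ := hWval ω
    rw [hsum_eq y ω j hj, hj]
  have hWint : Integrable W P := by
    rw [hWeq]
    exact integrable_finset_sum _ fun i _ => (integrable_const (y i)).indicator (hAmeas i)
  -- the conditional means on the atoms
  have hPj : ∀ j, 0 < (P (A j)).toReal :=
    fun j => ENNReal.toReal_pos (hWsupp j) (measure_ne_top P _)
  set c : Fin k → H := fun j => (P (A j)).toReal⁻¹ • ∫ ω in A j, V ω ∂P with hc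
  have hcint : ∀ j, ∫ ω in A j, V ω ∂P = (P (A j)).toReal • c j := by
    intro j
    rw [hc]
    simp only
    rw [smul_smul, mul_inv_cancel₀ (hPj j).ne', one_smul]
  -- bias-variance identity
  have hbv : ∀ (j : Fin k) (b : H),
      ∫ ω in A j, ‖V ω - b‖ ^ 2 ∂P
        = (∫ ω in A j, ‖V ω - c j‖ ^ 2 ∂P) + (P (A j)).toReal * ‖c j - b‖ ^ 2 := by
    intro j b
    have hVr : Integrable V (P.restrict (A j)) := hIntV.restrict
    have hVs : Integrable (fun ω => V ω - c j) (P.restrict (A j)) :=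
      hVr.sub (integrable_const (c j))
    have hzero : ∫ ω in A j, (V ω - c j) ∂P = 0 := by
      rw [integral_sub hVr (integrable_const (c j)), setIntegral_const, hcint j, measureReal_def, sub_self]
    have hinner : ∫ ω in A j, (⟪c j - b, V ω - c j⟫ : ℝ) ∂P = 0 := by
      rw [integral_inner hVs (c j - b), hzero, inner_zero_right]
    have hpt : ∀ ω, ‖V ω - b‖ ^ 2
        = ‖V ω - c j‖ ^ 2 + (2 * (⟪c j - b, V ω - c j⟫ : ℝ) + ‖c j - b‖ ^ 2) := by
      intro ω
      have hsplit : V ω - b = (V ω - c j) + (c j - b) := by abel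
      rw [hsplit, norm_add_sq_real, real_inner_comm]
      ring
    have hint1 : Integrable (fun ω => ‖V ω - c j‖ ^ 2) (P.restrict (A j)) :=
      (hIntSq (fun _ => c j) ‖c j‖ measurable_const (fun _ => le_refl _)).restrict
    have hint2 : Integrable (fun ω => 2 * (⟪c j - b, V ω - c j⟫ : ℝ) + ‖c j - b‖ ^ 2)
        (P.restrict (A j)) :=
      ((hVs.const_inner (c j - b)).const_mul 2).add (integrable_const _)
    calc ∫ ω in A j, ‖V ω - b‖ ^ 2 ∂P
        = ∫ ω in A j, (‖V ω - c j‖ ^ 2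
            + (2 * (⟪c j - b, V ω - c j⟫ : ℝ) + ‖c j - b‖ ^ 2)) ∂P := by
          apply integral_congr_ae
          filter_upwards with ω using hpt ω
      _ = (∫ ω in A j, ‖V ω - c j‖ ^ 2 ∂P)
            + ∫ ω in A j, (2 * (⟪c j - b, V ω - c j⟫ : ℝ) + ‖c j - b‖ ^ 2) ∂P :=
          integral_add hint1 hint2
      _ = (∫ ω in A j, ‖V ω - c j‖ ^ 2 ∂P) + (P (A j)).toReal * ‖c j - b‖ ^ 2 := by
          rw [integral_add ((hVs.const_inner (c j - b)).const_mul 2) (integrable_const _),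
            integral_const_mul, hinner, setIntegral_const]
          simp [smul_eq_mul, measureReal_def]
  -- apply optimality to Z' built from the conditional means
  set Mc : ℝ := Finset.univ.sup' Finset.univ_nonempty (fun j : Fin k => ‖c j‖) with hMc
  have hMcy : ∀ j, ‖c j‖ ≤ Mc := fun j => by rw [hMc]; exact Finset.le_sup' (fun j : Fin k => ‖c j‖) (Finset.mem_univ j)
  set Z' : Ω → H := fun ω => ∑ i, (A i).indicator (fun _ => c i) ω with hZ'
  have hZ'meas : Measurable Z' :=
    Finset.measurable_sum _ fun i _ => measurable_const.indicator (hAmeas i)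
  have hZ'val : ∀ ω (j : Fin k), ω ∈ A j → Z' ω = c j := fun ω j hj => hsum_eq c ω j hj
  have hZ'bd : ∀ ω, ‖Z' ω‖ ≤ Mc := by
    intro ω
    obtain ⟨j, hj⟩ := hWval ω
    rw [hZ'val ω j hj]
    exact hMcy j
  have hIZ' : Integrable (fun ω => ‖V ω - Z' ω‖ ^ 2) P := hIntSq Z' Mc hZ'meas hZ'bd
  have hle2 := hbest Z' hZ'meas
    ⟨Finset.univ.image c, (Finset.card_image_le).trans (by simp), fun ω => by
      obtain ⟨j, hj⟩ := hWval ω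
      rw [hZ'val ω j hj]
      exact Finset.mem_image_of_mem c (Finset.mem_univ _)⟩
  have hsplitW : ∫ ω, ‖V ω - W ω‖ ^ 2 ∂P
      = ∑ j, ((∫ ω in A j, ‖V ω - c j‖ ^ 2 ∂P) + (P (A j)).toReal * ‖c j - y j‖ ^ 2) := by
    rw [← setIntegral_univ]
    rw [setIntegral_partition hAmeas hAdisj hAcov MeasurableSet.univ
      (hIW.integrableOn)]
    refine Finset.sum_congr rfl fun j _ => ?_
    rw [Set.univ_inter, ← hbv j (y j)]
    apply setIntegral_congr_fun (hAmeas j)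
    intro ω hω
    have hWω : W ω = y j := hω
    simp only [hWω]
  have hsplitZ : ∫ ω, ‖V ω - Z' ω‖ ^ 2 ∂P = ∑ j, ∫ ω in A j, ‖V ω - c j‖ ^ 2 ∂P := by
    rw [← setIntegral_univ]
    rw [setIntegral_partition hAmeas hAdisj hAcov MeasurableSet.univ
      (hIZ'.integrableOn)]
    refine Finset.sum_congr rfl fun j _ => ?_
    rw [Set.univ_inter]
    apply setIntegral_congr_fun (hAmeas j)
    intro ω hω
    simp only [hZ'val ω j hω]
  have hkey : ∑ j, (P (A j)).toReal * ‖c j - y j‖ ^ 2 ≤ 0 := by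
    rw [hsplitW, hsplitZ, Finset.sum_add_distrib] at hle2
    linarith
  have hsum0 : ∑ j, (P (A j)).toReal * ‖c j - y j‖ ^ 2 = 0 :=
    le_antisymm hkey (Finset.sum_nonneg fun j _ => by positivity)
  have hcy : ∀ j, c j = y j := by
    intro j
    have hterm : (P (A j)).toReal * ‖c j - y j‖ ^ 2 = 0 :=
      (Finset.sum_eq_zero_iff_of_nonneg fun i _ => by positivity).mp hsum0 j (Finset.mem_univ j)
    rcases mul_eq_zero.mp hterm with h | h
    · exact absurd h (hPj j).ne'
    · have := norm_eq_zero.mp ((pow_eq_zero_iff two_ne_zero).mp h)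
      exact sub_eq_zero.mp this
  have hmean : ∀ j, ∫ ω in A j, V ω ∂P = (P (A j)).toReal • y j := by
    intro j
    rw [hcint j, hcy j]
  -- conclude via uniqueness of conditional expectation
  have hm : MeasurableSpace.comap W inferInstance ≤ ‹MeasurableSpace Ω› := hmeasW.comap_le
  haveI : SigmaFinite (P.trim hm) := by infer_instance
  refine (ae_eq_condExp_of_forall_setIntegral_eq hm hIntV
    (fun s _ _ => hWint.integrableOn) ?_ ?_).symm
  · intro s hs _
    obtain ⟨B, hB, rfl⟩ := hs
    have hsm : MeasurableSet (W ⁻¹' B) := hmeasW hB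
    rw [setIntegral_partition hAmeas hAdisj hAcov hsm hWint.integrableOn,
      setIntegral_partition hAmeas hAdisj hAcov hsm hIntV.integrableOn]
    refine Finset.sum_congr rfl fun j _ => ?_
    by_cases hjB : y j ∈ B
    · have hinter : W ⁻¹' B ∩ A j = A j := by
        apply Set.Subset.antisymm Set.inter_subset_right
        intro ω hω
        exact ⟨by rw [Set.mem_preimage, (hω : W ω = y j)]; exact hjB, hω⟩
      rw [hinter, hmean j]
      have : ∫ ω in A j, W ω ∂P = ∫ ω in A j, y j ∂P := by
        apply setIntegral_congr_fun (hAmeas j)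
        intro ω hω
        exact hω
      rw [this, setIntegral_const, measureReal_def]
    · have hinter : W ⁻¹' B ∩ A j = ∅ := by
        ext ω
        simp only [Set.mem_inter_iff, Set.mem_empty_iff_false, iff_false, not_and]
        intro hωB hωA
        exact hjB (by rw [← (hωA : W ω = y j)]; exact hωB)
      rw [hinter]
      simp
  · have hWm : Measurable[MeasurableSpace.comap W inferInstance] W :=
      Measurable.of_comap_le le_rfl
    exact StronglyMeasurable.aestronglyMeasurable hWm.stronglyMeasurable
end
end

section
/- Let V be a random element of a separable Hilbert space H with mean μ and finite second moment, and suppose V has k principal points ξ₁,...,ξ_k ∈ H. Then the dimension of the linear span of ξ₁ − μ, ..., ξ_k − μ is strictly smaller than k. -/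
open MeasureTheory ProbabilityTheory
open scoped RealInnerProductSpace

noncomputable section

variable {Ω : Type*} [MeasurableSpace Ω]

lemma PPaux.measurableSet_attractionDomain {H : Type*} [NormedAddCommGroup H]
    [MeasurableSpace H] [BorelSpace H] {k : ℕ} (y : Fin k → H) (j : Fin k) :
    MeasurableSet (attractionDomain y j) := by
  have h : attractionDomain y j =
      (⋂ ℓ, {x : H | ‖x - y j‖ ≤ ‖x - y ℓ‖}) ∩
      (⋂ ℓ, ⋂ _ : ℓ < j, {x : H | ‖x - y j‖ < ‖x - y ℓ‖}) := by
    ext x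
    simp [attractionDomain, Set.mem_iInter]
  rw [h]
  have hc : ∀ a : H, Continuous fun x : H => ‖x - a‖ :=
    fun a => (continuous_id.sub continuous_const).norm
  exact (MeasurableSet.iInter fun ℓ =>
      (isClosed_le (hc (y j)) (hc (y ℓ))).measurableSet).inter
    (MeasurableSet.iInter fun ℓ => MeasurableSet.iInter fun _ =>
      (isOpen_lt (hc (y j)) (hc (y ℓ))).measurableSet)

lemma PPaux.exists_mem_attractionDomain {H : Type*} [NormedAddCommGroup H]
    {k : ℕ} (hk : 0 < k) (y : Fin k → H) (x : H) :
    ∃ j, x ∈ attractionDomain y j := by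
  classical
  have : Nonempty (Fin k) := Fin.pos_iff_nonempty.mp hk
  have hne : (Finset.univ : Finset (Fin k)).Nonempty := Finset.univ_nonempty
  obtain ⟨j0, _, hj0⟩ := Finset.exists_min_image Finset.univ (fun j => ‖x - y j‖) hne
  set S : Finset (Fin k) := Finset.univ.filter (fun j => ∀ ℓ, ‖x - y j‖ ≤ ‖x - y ℓ‖) with hS
  have hSne : S.Nonempty := ⟨j0, by simp [hS, fun ℓ => hj0 ℓ (Finset.mem_univ ℓ)]⟩
  refine ⟨S.min' hSne, ?_, ?_⟩
  · have := S.min'_mem hSne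
    simpa [hS] using this
  · intro ℓ hℓ
    have hℓS : ℓ ∉ S := by
      intro hmem
      exact absurd (S.min'_le ℓ hmem) (not_le.mpr hℓ)
    have : ¬ ∀ ℓ', ‖x - y ℓ‖ ≤ ‖x - y ℓ'‖ := by
      intro h; exact hℓS (by simp [hS, h])
    push_neg at this
    obtain ⟨ℓ', hℓ'⟩ := this
    have hmin : ∀ ℓ'', ‖x - y (S.min' hSne)‖ ≤ ‖x - y ℓ''‖ := by
      have := S.min'_mem hSne
      simpa [hS] using this
    exact lt_of_le_of_lt (hmin ℓ') hℓ'

lemma PPaux.pairwise_disjoint_attractionDomain {H : Type*} [NormedAddCommGroup H]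
    {k : ℕ} (y : Fin k → H) :
    Pairwise (Function.onFun Disjoint (attractionDomain y)) := by
  intro i j hij
  rw [Function.onFun, Set.disjoint_left]
  rintro x ⟨hle_i, hlt_i⟩ ⟨hle_j, hlt_j⟩
  rcases lt_or_gt_of_ne hij with h | h
  · exact absurd (hle_i j) (not_le.mpr (hlt_j i h))
  · exact absurd (hle_j i) (not_le.mpr (hlt_i j h))

lemma PPaux.integrable_norm_sub_sq {H : Type*} [NormedAddCommGroup H] [InnerProductSpace ℝ H]
    [CompleteSpace H]
    (P : Measure Ω) [IsProbabilityMeasure P] (V : Ω → H)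
    (hm2 : Integrable (fun ω => ‖V ω‖ ^ 2) P) (hInt : Integrable V P) (c : H) :
    Integrable (fun ω => ‖V ω - c‖ ^ 2) P := by
  have h1 : Integrable (fun ω => (⟪c, V ω⟫ : ℝ)) P :=
    (innerSL ℝ c).integrable_comp hInt
  have : (fun ω => ‖V ω - c‖ ^ 2)
      = fun ω => ‖V ω‖ ^ 2 - 2 * (⟪c, V ω⟫ : ℝ) + ‖c‖ ^ 2 := by
    funext ω
    rw [norm_sub_sq_real, real_inner_comm]
  rw [this]
  exact ((hm2.sub (h1.const_mul 2)).add (integrable_const _))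

lemma PPaux.setIntegral_norm_sub_sq {H : Type*} [NormedAddCommGroup H] [InnerProductSpace ℝ H]
    [CompleteSpace H]
    (P : Measure Ω) [IsProbabilityMeasure P] (V : Ω → H)
    (hm2 : Integrable (fun ω => ‖V ω‖ ^ 2) P) (hInt : Integrable V P) (c : H)
    (A : Set Ω) :
    ∫ ω in A, ‖V ω - c‖ ^ 2 ∂P
      = (∫ ω in A, ‖V ω‖ ^ 2 ∂P) - 2 * ⟪∫ ω in A, V ω ∂P, c⟫
        + (P A).toReal * ‖c‖ ^ 2 := by
  have h1 : Integrable (fun ω => (⟪c, V ω⟫ : ℝ)) (P.restrict A) :=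
    ((innerSL ℝ c).integrable_comp hInt).restrict
  have hV : Integrable V (P.restrict A) := hInt.restrict
  have hm2' : Integrable (fun ω => ‖V ω‖ ^ 2) (P.restrict A) := hm2.restrict
  have hrw : (fun ω => ‖V ω - c‖ ^ 2)
      = fun ω => (‖V ω‖ ^ 2 - 2 * (⟪c, V ω⟫ : ℝ)) + ‖c‖ ^ 2 := by
    funext ω
    rw [norm_sub_sq_real, real_inner_comm]
  have hfg : Integrable (fun ω => ‖V ω‖ ^ 2 - 2 * (⟪c, V ω⟫ : ℝ)) (P.restrict A) :=
    hm2'.sub (h1.const_mul 2)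
  have h2 : ∫ ω in A, (⟪c, V ω⟫ : ℝ) ∂P = ⟪c, ∫ ω in A, V ω ∂P⟫ := by
    simpa using ((innerSL ℝ c).integral_comp_comm hV)
  rw [hrw, integral_add hfg (integrable_const _),
    integral_sub hm2' (h1.const_mul 2), MeasureTheory.integral_const_mul, h2,
    setIntegral_const]
  rw [real_inner_comm]
  simp [smul_eq_mul, Measure.real]


/-- The `k` principal points of a random element with mean `μ0`, recentered at the mean,
span a subspace of dimension strictly smaller than `k`. -/
theorem principal_span_dim_lt {H : Type*}
    [NormedAddCommGroup H] [InnerProductSpace ℝ H] [CompleteSpace H]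
    [SecondCountableTopology H] [MeasurableSpace H] [BorelSpace H]
    (P : Measure Ω) [IsProbabilityMeasure P]
    (V : Ω → H) (hmeas : Measurable V)
    (hm2 : Integrable (fun ω => ‖V ω‖ ^ 2) P)
    (hInt : Integrable V P) (μ0 : H) (hmean : ∫ ω, V ω ∂P = μ0)
    {k : ℕ} (hk : 0 < k) (ξ : Fin k → H) (hpp : IsPrincipal P V ξ) :
    Module.finrank ℝ ↥(Submodule.span ℝ (Set.range fun j => ξ j - μ0)) < k := by
  classical
  have hkne : Nonempty (Fin k) := Fin.pos_iff_nonempty.mp hk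
  set A : Fin k → Set Ω := fun j => V ⁻¹' attractionDomain ξ j with hA
  have hAm : ∀ j, MeasurableSet (A j) :=
    fun j => hmeas (PPaux.measurableSet_attractionDomain ξ j)
  have hAdisj : Pairwise (Function.onFun Disjoint A) :=
    fun i j hij => (PPaux.pairwise_disjoint_attractionDomain ξ hij).preimage V
  have hAcover : ⋃ j, A j = Set.univ := by
    ext ω
    simp only [Set.mem_iUnion, Set.mem_univ, iff_true]
    exact PPaux.exists_mem_attractionDomain hk ξ (V ω)
  set p : Fin k → ℝ := fun j => (P (A j)).toReal with hp
  set I : Fin k → H := fun j => ∫ ω in A j, V ω ∂P with hI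
  set z : Fin k → H := fun j => if p j = 0 then ξ j else (p j)⁻¹ • I j with hz
  have hpnn : ∀ j, 0 ≤ p j := fun j => ENNReal.toReal_nonneg
  -- the probabilities sum to 1
  have hpsum : ∑ j, p j = 1 := by
    have h := measure_iUnion (μ := P) hAdisj hAm
    rw [hAcover, measure_univ, tsum_fintype] at h
    have := ENNReal.toReal_sum (s := Finset.univ) (f := fun j => P (A j))
      (fun j _ => measure_ne_top P _)
    rw [← h] at this
    simpa [hp] using this.symm
  -- the conditional integrals sum to μ0
  have hIsum : ∑ j, I j = μ0 := by
    have h := integral_iUnion hAm hAdisj (hInt.integrableOn (s := ⋃ j, A j))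
    rw [hAcover, setIntegral_univ, hmean, tsum_fintype] at h
    exact h.symm
  -- pointwise minimum facts
  have hbdd : ∀ (y : Fin k → H) (ω : Ω),
      BddBelow (Set.range fun ℓ => ‖V ω - y ℓ‖) := by
    intro y ω
    exact ⟨0, by rintro r ⟨ℓ, rfl⟩; exact norm_nonneg _⟩
  have hminnn : ∀ (y : Fin k → H) (ω : Ω), 0 ≤ ⨅ ℓ, ‖V ω - y ℓ‖ :=
    fun y ω => le_ciInf fun ℓ => norm_nonneg _
  have hminξ : ∀ j, ∀ ω ∈ A j, (⨅ ℓ, ‖V ω - ξ ℓ‖) = ‖V ω - ξ j‖ := by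
    intro j ω hω
    obtain ⟨h1, -⟩ := hω
    exact le_antisymm (ciInf_le (hbdd ξ ω) j) (le_ciInf h1)
  -- integrability of the squared minimum
  have hmeas_min : ∀ (y : Fin k → H),
      Measurable fun ω => (⨅ j, ‖V ω - y j‖) ^ 2 := by
    intro y
    exact (Measurable.iInf fun j =>
      ((continuous_id.sub continuous_const).norm.measurable.comp hmeas)).pow_const 2
  have hint_min : ∀ (y : Fin k → H),
      Integrable (fun ω => (⨅ j, ‖V ω - y j‖) ^ 2) P := by
    intro y
    refine Integrable.mono'
      (PPaux.integrable_norm_sub_sq P V hm2 hInt (y ⟨0, hk⟩))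
      (hmeas_min y).aestronglyMeasurable ?_
    filter_upwards with ω
    rw [Real.norm_eq_abs, abs_of_nonneg (sq_nonneg _)]
    exact pow_le_pow_left₀ (hminnn y ω) (ciInf_le (hbdd y ω) _) 2
  -- splitting an integral along the partition
  have hsplit : ∀ (g : Ω → ℝ), Integrable g P →
      ∫ ω, g ω ∂P = ∑ j, ∫ ω in A j, g ω ∂P := by
    intro g hg
    rw [← setIntegral_univ (f := g) (μ := P), ← hAcover,
      integral_iUnion hAm hAdisj (hg.integrableOn (s := ⋃ j, A j)), tsum_fintype]
  have hS : ∫ ω, (⨅ j, ‖V ω - ξ j‖) ^ 2 ∂P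
      = ∑ j, ∫ ω in A j, ‖V ω - ξ j‖ ^ 2 ∂P := by
    rw [hsplit _ (hint_min ξ)]
    refine Finset.sum_congr rfl fun j _ => ?_
    refine setIntegral_congr_fun (hAm j) fun ω hω => ?_
    rw [hminξ j ω hω]
  have hz_le : ∫ ω, (⨅ j, ‖V ω - z j‖) ^ 2 ∂P
      ≤ ∑ j, ∫ ω in A j, ‖V ω - z j‖ ^ 2 ∂P := by
    rw [hsplit _ (hint_min z)]
    refine Finset.sum_le_sum fun j _ => ?_
    refine setIntegral_mono_on ((hint_min z).integrableOn)
      ((PPaux.integrable_norm_sub_sq P V hm2 hInt (z j)).integrableOn)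
      (hAm j) fun ω _ => ?_
    exact pow_le_pow_left₀ (hminnn z ω) (ciInf_le (hbdd z ω) j) 2
  -- the per-domain variance identity
  have hzint : ∀ j, ∫ ω in A j, ‖V ω - z j‖ ^ 2 ∂P
      = ∫ ω in A j, ‖V ω - ξ j‖ ^ 2 ∂P - p j * ‖ξ j - z j‖ ^ 2 := by
    intro j
    by_cases hpj : p j = 0
    · have hzj : z j = ξ j := by rw [hz]; simp [hpj]
      rw [hzj, hpj]
      ring
    · have hIj : I j = p j • z j := by
        rw [hz]; simp only [if_neg hpj]
        rw [smul_inv_smul₀ hpj]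
      have e1 := PPaux.setIntegral_norm_sub_sq P V hm2 hInt (z j) (A j)
      have e2 := PPaux.setIntegral_norm_sub_sq P V hm2 hInt (ξ j) (A j)
      have hPA : (P (A j)).toReal = p j := rfl
      have hIA : (∫ ω in A j, V ω ∂P) = I j := rfl
      rw [hPA, hIA, hIj, real_inner_smul_left] at e1 e2
      have h3 : ‖ξ j - z j‖ ^ 2 = ‖ξ j‖ ^ 2 - 2 * ⟪ξ j, z j⟫ + ‖z j‖ ^ 2 :=
        norm_sub_sq_real _ _
      have h4 : (⟪z j, ξ j⟫ : ℝ) = ⟪ξ j, z j⟫ := real_inner_comm _ _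
      rw [e1, e2]
      rw [real_inner_self_eq_norm_sq, h4, h3]
      ring
  have hsum_eq : ∑ j, ∫ ω in A j, ‖V ω - z j‖ ^ 2 ∂P
      = (∑ j, ∫ ω in A j, ‖V ω - ξ j‖ ^ 2 ∂P) - ∑ j, p j * ‖ξ j - z j‖ ^ 2 := by
    rw [← Finset.sum_sub_distrib]
    exact Finset.sum_congr rfl fun j _ => hzint j
  have hkey : ∑ j, p j * ‖ξ j - z j‖ ^ 2 ≤ 0 := by
    have h1 := hpp z
    rw [hS] at h1
    linarith [hz_le, hsum_eq]
  have hnn : ∀ j ∈ Finset.univ, 0 ≤ p j * ‖ξ j - z j‖ ^ 2 :=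
    fun j _ => mul_nonneg (hpnn j) (sq_nonneg _)
  have hzero : ∑ j, p j * ‖ξ j - z j‖ ^ 2 = 0 :=
    le_antisymm hkey (Finset.sum_nonneg hnn)
  have hterm : ∀ j, p j * ‖ξ j - z j‖ ^ 2 = 0 :=
    fun j => (Finset.sum_eq_zero_iff_of_nonneg hnn).mp hzero j (Finset.mem_univ j)
  -- self-consistency
  have hsc : ∀ j, I j = p j • ξ j := by
    intro j
    by_cases hpj : p j = 0
    · have hPA : P (A j) = 0 := by
        have hfin := measure_ne_top P (A j)
        have := (ENNReal.toReal_eq_zero_iff _).mp hpj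
        exact this.resolve_right hfin
      have hI0 : I j = 0 := by
        rw [hI]; simp only
        rw [Measure.restrict_eq_zero.mpr hPA, integral_zero_measure]
      rw [hI0, hpj, zero_smul]
    · have h5 : ‖ξ j - z j‖ ^ 2 = 0 :=
        (mul_eq_zero.mp (hterm j)).resolve_left hpj
      have h6 : ‖ξ j - z j‖ = 0 := by
        have := sq_eq_zero_iff.mp h5
        exact this
      have hξz : ξ j = z j := by
        rwa [norm_eq_zero, sub_eq_zero] at h6
      rw [hξz, hz]; simp only [if_neg hpj]
      rw [smul_inv_smul₀ hpj]
  -- conclude: a nontrivial linear relation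
  have hmean' : ∑ j, p j • ξ j = μ0 := by
    rw [← hIsum]
    exact Finset.sum_congr rfl fun j _ => (hsc j).symm
  have hrel : ∑ j, p j • (ξ j - μ0) = 0 := by
    have : ∑ j, p j • (ξ j - μ0) = (∑ j, p j • ξ j) - (∑ j, p j) • μ0 := by
      rw [Finset.sum_smul, ← Finset.sum_sub_distrib]
      exact Finset.sum_congr rfl fun j _ => smul_sub _ _ _
    rw [this, hmean', hpsum, one_smul, sub_self]
  have hex : ∃ j, p j ≠ 0 := by
    by_contra h
    push_neg at h
    rw [Finset.sum_eq_zero (fun j _ => h j)] at hpsum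
    exact one_ne_zero hpsum.symm
  have hnli : ¬ LinearIndependent ℝ (fun j => ξ j - μ0) := by
    intro hli
    obtain ⟨j, hj⟩ := hex
    exact hj (Fintype.linearIndependent_iff.mp hli p hrel j)
  have hle : Module.finrank ℝ ↥(Submodule.span ℝ (Set.range fun j => ξ j - μ0)) ≤ k := by
    simpa [Set.finrank] using finrank_range_le_card (fun j => ξ j - μ0)
  refine lt_of_le_of_ne hle fun heq => hnli ?_
  rw [linearIndependent_iff_card_eq_finrank_span]
  simpa [Set.finrank] using heq.symm
end
end
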